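/- arXiv:1512.03198 — 6 statements merged into one kernel-verified Lean document; each statement's English description precedes it below -/
import Mathlib

section
/- Let n ∈ ℕ, n ≥ 2. Let I : (0,1] → (0,∞) be continuous and nondecreasing, L = ∫_0^1 dr/I(r), M determined by ∫_{M(t)}^1 dr/I(r) = t, η(r) = (I(M(r))/ω_{n−1})^{1/(n−1)}, and Ω_I = {(x', x_n) ∈ ℝ^{n−1} × ℝ : 0 < x_n < L, |x'| < η(x_n)}. Let h : (0,1) → [0,∞) be measurable and define F : Ω_I → [0,∞) by F(x) = h(M(x_n)). Then for every λ > 0, the n-dimensional Lebesgue measure of {x ∈ Ω_I : F(x) > λ} equals the one-dimensional Lebesgue measure of {t ∈ (0,1) : h(t) > λ}; that is, F and h are equimeasurable. -/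
open MeasureTheory ENNReal NNReal

/-- `L = ∫_0^1 dr / I(r)`, with values in `(0,∞]`. -/
noncomputable def Lint (I : ℝ → ℝ) : ℝ≥0∞ :=
  ∫⁻ r in Set.Ioo (0:ℝ) 1, ENNReal.ofReal (1 / I r)

/-- The Lebesgue measure of the unit ball in `ℝ^d`. -/
noncomputable def omegaBall (d : ℕ) : ℝ :=
  (volume (Metric.ball (0 : EuclideanSpace ℝ (Fin d)) 1)).toReal

/-- Auxiliary: `G s = ∫_s^1 dr / I(r)`. -/
noncomputable def Gfun (I : ℝ → ℝ) (s : ℝ) : ℝ := ∫ r in s..1, 1 / I r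

section Aux

variable {I : ℝ → ℝ}
    (hIc : ContinuousOn I (Set.Ioc (0:ℝ) 1))
    (hImono : MonotoneOn I (Set.Ioc (0:ℝ) 1))
    (hIpos : ∀ t ∈ Set.Ioc (0:ℝ) 1, 0 < I t)

include hIc hIpos

lemma aux_Jc : ContinuousOn (fun r => 1 / I r) (Set.Ioc (0:ℝ) 1) :=
  continuousOn_const.div hIc (fun x hx => (hIpos x hx).ne')

lemma aux_Jint (a b : ℝ) (ha : a ∈ Set.Ioc (0:ℝ) 1) (hb : b ∈ Set.Ioc (0:ℝ) 1) :
    IntervalIntegrable (fun r => 1 / I r) volume a b := by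
  apply ContinuousOn.intervalIntegrable
  apply (aux_Jc hIc hIpos).mono
  intro x hx
  rw [Set.mem_uIcc] at hx
  constructor
  · rcases hx with ⟨h1, _⟩ | ⟨h1, _⟩
    · exact lt_of_lt_of_le ha.1 h1
    · exact lt_of_lt_of_le hb.1 h1
  · rcases hx with ⟨_, h2⟩ | ⟨_, h2⟩
    · exact le_trans h2 hb.2
    · exact le_trans h2 ha.2

lemma aux_Gsub (a b : ℝ) (ha : a ∈ Set.Ioc (0:ℝ) 1) (hb : b ∈ Set.Ioc (0:ℝ) 1) :
    Gfun I a = (∫ r in a..b, 1 / I r) + Gfun I b :=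
  (intervalIntegral.integral_add_adjacent_intervals
    (aux_Jint hIc hIpos a b ha hb) (aux_Jint hIc hIpos b 1 hb ⟨one_pos, le_refl 1⟩)).symm

lemma aux_Ganti (a b : ℝ) (ha : a ∈ Set.Ioc (0:ℝ) 1) (hb : b ∈ Set.Ioc (0:ℝ) 1)
    (hab : a < b) : Gfun I b < Gfun I a := by
  have hpos : 0 < ∫ r in a..b, 1 / I r := by
    apply intervalIntegral.intervalIntegral_pos_of_pos_on (aux_Jint hIc hIpos a b ha hb) _ hab
    intro x hx
    exact one_div_pos.2 (hIpos x ⟨lt_trans ha.1 hx.1, le_trans hx.2.le hb.2⟩)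
  have := aux_Gsub hIc hIpos a b ha hb
  linarith

omit hIc hIpos in
lemma aux_G1 : Gfun I 1 = 0 := intervalIntegral.integral_same

lemma aux_Gpos (s : ℝ) (hs : s ∈ Set.Ioo (0:ℝ) 1) : 0 < Gfun I s := by
  have := aux_Ganti hIc hIpos s 1 ⟨hs.1, hs.2.le⟩ ⟨one_pos, le_refl 1⟩ hs.2
  rw [aux_G1] at this
  exact this

lemma aux_Ginj (a b : ℝ) (ha : a ∈ Set.Ioc (0:ℝ) 1) (hb : b ∈ Set.Ioc (0:ℝ) 1)
    (hG : Gfun I a = Gfun I b) : a = b := by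
  rcases lt_trichotomy a b with hlt | heq | hgt
  · exact absurd hG (aux_Ganti hIc hIpos a b ha hb hlt).ne'
  · exact heq
  · exact absurd hG (aux_Ganti hIc hIpos b a hb ha hgt).ne

include hImono in
/-- The key quantitative fact: for `s ∈ (0,1)`, `∫_s^1 dr/I(r) < L`. -/
lemma aux_G_lt_Lint (s : ℝ) (hs : s ∈ Set.Ioo (0:ℝ) 1) :
    ENNReal.ofReal (Gfun I s) < Lint I := by
  have hsIoc : s ∈ Set.Ioc (0:ℝ) 1 := ⟨hs.1, hs.2.le⟩
  -- the integral over `[s,1)` equals `ofReal (G s)`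
  have hint : IntegrableOn (fun r => 1 / I r) (Set.Ioo s 1) volume := by
    exact ((aux_Jint hIc hIpos s 1 hsIoc ⟨one_pos, le_refl 1⟩).1).mono_set
      Set.Ioo_subset_Ioc_self
  have hG : Gfun I s = ∫ r in Set.Ioo s 1, 1 / I r := by
    rw [Gfun, intervalIntegral.integral_of_le hs.2.le, integral_Ioc_eq_integral_Ioo]
  have hofReal : ENNReal.ofReal (Gfun I s) = ∫⁻ r in Set.Ioo s 1, ENNReal.ofReal (1 / I r) := by
    rw [hG]
    apply ofReal_integral_eq_lintegral_ofReal hint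
    filter_upwards [ae_restrict_mem measurableSet_Ioo] with x hx
    exact (one_div_pos.2 (hIpos x ⟨lt_trans hs.1 hx.1, hx.2.le⟩)).le
  have hIco : ∫⁻ r in Set.Ico s 1, ENNReal.ofReal (1 / I r)
      = ∫⁻ r in Set.Ioo s 1, ENNReal.ofReal (1 / I r) :=
    (setLIntegral_congr (MeasureTheory.Ioo_ae_eq_Ico (μ := volume) (a := s) (b := 1))).symm
  -- split `Lint`
  have hsplit : Lint I = (∫⁻ r in Set.Ioo (0:ℝ) s, ENNReal.ofReal (1 / I r))
      + ∫⁻ r in Set.Ico s 1, ENNReal.ofReal (1 / I r) := by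
    rw [Lint, ← Set.Ioo_union_Ico_eq_Ioo hs.1 hs.2.le, lintegral_union measurableSet_Ico]
    rw [Set.disjoint_left]
    intro x hx hx'
    exact absurd hx.2 (not_lt.2 hx'.1)
  -- the first piece is positive
  have hpos : 0 < ∫⁻ r in Set.Ioo (0:ℝ) s, ENNReal.ofReal (1 / I r) := by
    have hlow : ENNReal.ofReal (1 / I s) * volume (Set.Ioo (0:ℝ) s)
        ≤ ∫⁻ r in Set.Ioo (0:ℝ) s, ENNReal.ofReal (1 / I r) := by
      rw [← setLIntegral_const]
      apply setLIntegral_mono' measurableSet_Ioo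
      intro x hx
      apply ENNReal.ofReal_le_ofReal
      apply one_div_le_one_div_of_le (hIpos x ⟨hx.1, le_trans hx.2.le hs.2.le⟩)
      exact hImono ⟨hx.1, le_trans hx.2.le hs.2.le⟩ hsIoc hx.2.le
    apply lt_of_lt_of_le _ hlow
    apply ENNReal.mul_pos
    · exact (ENNReal.ofReal_pos.2 (one_div_pos.2 (hIpos s hsIoc))).ne'
    · rw [Real.volume_Ioo, sub_zero]
      exact (ENNReal.ofReal_pos.2 hs.1).ne'
  rw [hsplit, hIco, ← hofReal, add_comm]
  exact ENNReal.lt_add_right ENNReal.ofReal_ne_top hpos.ne'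

end Aux


/-- Antitone global modification of `M`. -/
noncomputable def Mbar (I M : ℝ → ℝ) (t : ℝ) : ℝ :=
  if ENNReal.ofReal t < Lint I then (if 0 < t then M t else 1) else 0

/-- Monotone global modification of `I`. -/
noncomputable def Ibar (I : ℝ → ℝ) (s : ℝ) : ℝ :=
  if 0 < s then I (min s 1) else 0

/-- the function `F(x) = h(M(x_n))` on `Ω_I` is equimeasurable
with `h` on `(0,1)`. -/
theorem equimeasurability_on_OmegaI (n : ℕ) (hn : 2 ≤ n) (I : ℝ → ℝ)
    (hIc : ContinuousOn I (Set.Ioc (0:ℝ) 1))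
    (hImono : MonotoneOn I (Set.Ioc (0:ℝ) 1))
    (hIpos : ∀ t ∈ Set.Ioc (0:ℝ) 1, 0 < I t)
    (M : ℝ → ℝ)
    (hM : ∀ t : ℝ, 0 ≤ t → ENNReal.ofReal t < Lint I →
      M t ∈ Set.Ioc (0:ℝ) 1 ∧ ∫ r in (M t)..1, 1 / I r = t)
    (h : ℝ → ℝ) (hmeas : Measurable h) (hnonneg : ∀ t ∈ Set.Ioo (0:ℝ) 1, 0 ≤ h t) :
    ∀ lam : ℝ, 0 < lam →
      volume {p : EuclideanSpace ℝ (Fin (n - 1)) × ℝ |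
          (0 < p.2 ∧ ENNReal.ofReal p.2 < Lint I ∧
            ‖p.1‖ < (I (M p.2) / omegaBall (n - 1)) ^ (1 / ((n : ℝ) - 1))) ∧
          lam < h (M p.2)}
        = volume {t ∈ Set.Ioo (0:ℝ) 1 | lam < h t} := by
  intro lam _hlam
  -- numeric facts
  have hn1 : (1:ℕ) ≤ n := by omega
  have hnR : (((n - 1 : ℕ) : ℝ)) = (n : ℝ) - 1 := by
    rw [Nat.cast_sub hn1, Nat.cast_one]
  have hnne : ((n:ℝ) - 1) ≠ 0 := by
    have : (2:ℝ) ≤ (n:ℝ) := by exact_mod_cast hn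
    linarith
  -- the parameter set S
  set S : Set ℝ := {t : ℝ | 0 < t ∧ ENNReal.ofReal t < Lint I} with hSdef
  have hSopen : IsOpen S := by
    have hrw : S = Set.Ioi (0:ℝ) ∩ ENNReal.ofReal ⁻¹' (Set.Iio (Lint I)) := rfl
    rw [hrw]
    exact isOpen_Ioi.inter (ENNReal.continuous_ofReal.isOpen_preimage _ isOpen_Iio)
  have hSmeas : MeasurableSet S := hSopen.measurableSet
  have hMmem : ∀ t ∈ S, M t ∈ Set.Ioc (0:ℝ) 1 ∧ Gfun I (M t) = t := fun t ht =>
    hM t ht.1.le ht.2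
  have hMoo : ∀ t ∈ S, M t ∈ Set.Ioo (0:ℝ) 1 := by
    intro t ht
    obtain ⟨hmem, hG⟩ := hMmem t ht
    refine ⟨hmem.1, lt_of_le_of_ne hmem.2 ?_⟩
    intro he
    rw [he, aux_G1] at hG
    exact ht.1.ne hG
  have hGS : ∀ s ∈ Set.Ioo (0:ℝ) 1, Gfun I s ∈ S :=
    fun s hs => ⟨aux_Gpos hIc hIpos s hs, aux_G_lt_Lint hIc hImono hIpos s hs⟩
  have hMG : ∀ s ∈ Set.Ioo (0:ℝ) 1, M (Gfun I s) = s := by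
    intro s hs
    obtain ⟨hmem, hG⟩ := hMmem _ (hGS s hs)
    exact aux_Ginj hIc hIpos _ s hmem ⟨hs.1, hs.2.le⟩ hG
  have himg : M '' S = Set.Ioo (0:ℝ) 1 := by
    apply Set.Subset.antisymm
    · rintro _ ⟨t, ht, rfl⟩; exact hMoo t ht
    · intro s hs; exact ⟨Gfun I s, hGS s hs, hMG s hs⟩
  have hManti : ∀ t₁ ∈ S, ∀ t₂ ∈ S, t₁ < t₂ → M t₂ < M t₁ := by
    intro t₁ h₁ t₂ h₂ hlt
    by_contra hcon
    push_neg at hcon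
    rcases hcon.lt_or_eq with hc | hc
    · have := aux_Ganti hIc hIpos _ _ (hMmem t₁ h₁).1 (hMmem t₂ h₂).1 hc
      rw [(hMmem t₁ h₁).2, (hMmem t₂ h₂).2] at this
      linarith
    · have e : t₁ = t₂ := by rw [← (hMmem t₁ h₁).2, ← (hMmem t₂ h₂).2, hc]
      exact hlt.ne e
  have hMinj : Set.InjOn M S := by
    intro a ha b hb he
    rw [← (hMmem a ha).2, ← (hMmem b hb).2, he]
  -- continuity of M on S
  have hMcont : ∀ t ∈ S, ContinuousAt M t := by
    intro t ht
    have hsoo := hMoo t ht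
    rw [ContinuousAt, Metric.tendsto_nhds]
    intro ε hε
    set s : ℝ := M t with hsdef
    set s₁ : ℝ := max (s/2) (s - ε) with hs1def
    set s₂ : ℝ := min ((s+1)/2) (s + ε) with hs2def
    have hs1lt : s₁ < s := max_lt (by linarith [hsoo.1]) (by linarith)
    have hs1oo : s₁ ∈ Set.Ioo (0:ℝ) 1 :=
      ⟨lt_max_of_lt_left (by linarith [hsoo.1]), lt_trans hs1lt hsoo.2⟩
    have hs2gt : s < s₂ := lt_min (by linarith [hsoo.2]) (by linarith)
    have hs2Ioc : s₂ ∈ Set.Ioc (0:ℝ) 1 :=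
      ⟨lt_trans hsoo.1 hs2gt, le_trans (min_le_left _ _) (by linarith [hsoo.2])⟩
    have hGt : Gfun I s = t := (hMmem t ht).2
    have hG2 : Gfun I s₂ < t := by
      rw [← hGt]
      exact aux_Ganti hIc hIpos s s₂ ⟨hsoo.1, hsoo.2.le⟩ hs2Ioc hs2gt
    have hG1 : t < Gfun I s₁ := by
      rw [← hGt]
      exact aux_Ganti hIc hIpos s₁ s ⟨hs1oo.1, hs1oo.2.le⟩ ⟨hsoo.1, hsoo.2.le⟩ hs1lt
    have hU : Set.Ioo (Gfun I s₂) (Gfun I s₁) ∩ S ∈ nhds t :=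
      (isOpen_Ioo.inter hSopen).mem_nhds ⟨⟨hG2, hG1⟩, ht⟩
    filter_upwards [hU] with t' ht'
    obtain ⟨htI, htS⟩ := ht'
    have hMt' := hMmem t' htS
    have hlow : s₁ < M t' := by
      by_contra hcon
      push_neg at hcon
      rcases hcon.lt_or_eq with hc | hc
      · have := aux_Ganti hIc hIpos _ _ hMt'.1 ⟨hs1oo.1, hs1oo.2.le⟩ hc
        rw [hMt'.2] at this
        exact absurd htI.2 (not_lt.2 this.le)
      · rw [← hMt'.2, hc] at htI
        exact absurd htI.2 (lt_irrefl _)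
    have hhigh : M t' < s₂ := by
      by_contra hcon
      push_neg at hcon
      rcases hcon.lt_or_eq with hc | hc
      · have := aux_Ganti hIc hIpos _ _ hs2Ioc hMt'.1 hc
        rw [hMt'.2] at this
        exact absurd htI.1 (not_lt.2 this.le)
      · rw [← hMt'.2, ← hc] at htI
        exact absurd htI.1 (lt_irrefl _)
    rw [Real.dist_eq, abs_sub_lt_iff]
    constructor
    · have := hhigh.trans_le (min_le_right ((s+1)/2) (s + ε))
      linarith
    · have := (le_max_right (s/2) (s - ε)).trans_lt hlow
      linarith
  -- differentiability
  have hJoo : ContinuousOn (fun r => 1 / I r) (Set.Ioo (0:ℝ) 1) :=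
    (aux_Jc hIc hIpos).mono Set.Ioo_subset_Ioc_self
  have hGderiv : ∀ s ∈ Set.Ioo (0:ℝ) 1, HasDerivAt (Gfun I) (-(1 / I s)) s := by
    intro s hs
    exact intervalIntegral.integral_hasDerivAt_left
      (aux_Jint hIc hIpos s 1 ⟨hs.1, hs.2.le⟩ ⟨one_pos, le_refl 1⟩)
      (ContinuousOn.stronglyMeasurableAtFilter isOpen_Ioo hJoo s hs)
      (hJoo.continuousAt (isOpen_Ioo.mem_nhds hs))
  have hMderiv : ∀ t ∈ S, HasDerivWithinAt M (-(I (M t))) S t := by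
    intro t ht
    have hIMpos : 0 < I (M t) := hIpos _ (hMmem t ht).1
    have key : HasDerivAt M (-(1 / I (M t)))⁻¹ t := by
      apply HasDerivAt.of_local_left_inverse (hMcont t ht) (hGderiv (M t) (hMoo t ht))
      · exact neg_ne_zero.2 (one_div_pos.2 hIMpos).ne'
      · filter_upwards [hSopen.mem_nhds ht] with y hy using (hMmem y hy).2
    have hinv : (-(1 / I (M t)))⁻¹ = -(I (M t)) := by
      rw [one_div, inv_neg, inv_inv]
    rw [hinv] at key
    exact key.hasDerivWithinAt
  -- global measurable modifications
  have hMbS : ∀ t ∈ S, Mbar I M t = M t := by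
    intro t ht
    simp only [Mbar, if_pos ht.2, if_pos ht.1]
  have hMb01 : ∀ t, 0 ≤ Mbar I M t ∧ Mbar I M t ≤ 1 := by
    intro t
    simp only [Mbar]
    split_ifs with h1 h2
    · exact ⟨(hMmem t ⟨h2, h1⟩).1.1.le, (hMmem t ⟨h2, h1⟩).1.2⟩
    · norm_num
    · norm_num
  have hMbanti : Antitone (Mbar I M) := by
    intro t₁ t₂ h12
    rcases eq_or_lt_of_le h12 with rfl | hlt
    · exact le_refl _
    by_cases h2L : ENNReal.ofReal t₂ < Lint I
    · have h1L : ENNReal.ofReal t₁ < Lint I :=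
        lt_of_le_of_lt (ENNReal.ofReal_le_ofReal h12) h2L
      by_cases h2p : 0 < t₂
      · by_cases h1p : 0 < t₁
        · simp only [Mbar, if_pos h2L, if_pos h2p, if_pos h1L, if_pos h1p]
          exact (hManti t₁ ⟨h1p, h1L⟩ t₂ ⟨h2p, h2L⟩ hlt).le
        · simp only [Mbar, if_pos h2L, if_pos h2p, if_pos h1L, if_neg h1p]
          exact (hMmem t₂ ⟨h2p, h2L⟩).1.2
      · have h1p : ¬ 0 < t₁ := fun hc => h2p (lt_trans hc hlt)
        simp only [Mbar, if_pos h2L, if_neg h2p, if_pos h1L, if_neg h1p]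
        exact le_refl _
    · have h0 : Mbar I M t₂ = 0 := by simp only [Mbar, if_neg h2L]
      rw [h0]
      exact (hMb01 t₁).1
  have hMbmeas : Measurable (Mbar I M) := hMbanti.measurable
  have hIbmono : Monotone (Ibar I) := by
    intro s₁ s₂ hle
    by_cases h1 : 0 < s₁
    · have h2 : 0 < s₂ := lt_of_lt_of_le h1 hle
      simp only [Ibar, if_pos h1, if_pos h2]
      exact hImono ⟨lt_min h1 one_pos, min_le_right _ _⟩
        ⟨lt_min h2 one_pos, min_le_right _ _⟩ (min_le_min hle (le_refl 1))
    · simp only [Ibar, if_neg h1]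
      split_ifs with h2
      · exact (hIpos _ ⟨lt_min h2 one_pos, min_le_right _ _⟩).le
      · exact le_refl 0
  have hIbmeas : Measurable (Ibar I) := hIbmono.measurable
  have hIbeq : ∀ u ∈ Set.Ioc (0:ℝ) 1, Ibar I u = I u := by
    intro u hu
    simp only [Ibar, if_pos hu.1, min_eq_left hu.2]
  -- the radius function and the base set
  set ρ : ℝ → ℝ := fun t => (Ibar I (Mbar I M t) / omegaBall (n-1)) ^ (1 / ((n:ℝ) - 1))
    with hρdef
  have hρmeas : Measurable ρ := ((hIbmeas.comp hMbmeas).div_const _).pow_const _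
  set D : Set ℝ := S ∩ {t | lam < h (Mbar I M t)} with hDdef
  have hDmeas : MeasurableSet D :=
    hSmeas.inter (measurableSet_lt measurable_const (hmeas.comp hMbmeas))
  have hDS : D ⊆ S := Set.inter_subset_left
  set B : Set (EuclideanSpace ℝ (Fin (n-1)) × ℝ) := {p | p.2 ∈ D ∧ ‖p.1‖ < ρ p.2} with hBdef
  have hBmeas : MeasurableSet B :=
    (hDmeas.preimage measurable_snd).inter
      (measurableSet_lt measurable_fst.norm (hρmeas.comp measurable_snd))
  -- the set in the statement equals B
  have hAB : {p : EuclideanSpace ℝ (Fin (n - 1)) × ℝ |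
      (0 < p.2 ∧ ENNReal.ofReal p.2 < Lint I ∧
        ‖p.1‖ < (I (M p.2) / omegaBall (n - 1)) ^ (1 / ((n : ℝ) - 1))) ∧
      lam < h (M p.2)} = B := by
    ext p
    simp only [hBdef, Set.mem_setOf_eq, hDdef, Set.mem_inter_iff]
    constructor
    · rintro ⟨⟨h1, h2, h3⟩, h4⟩
      have hpS : p.2 ∈ S := ⟨h1, h2⟩
      have hMb := hMbS p.2 hpS
      have hIb : Ibar I (Mbar I M p.2) = I (M p.2) := by
        rw [hMb]; exact hIbeq _ (hMmem p.2 hpS).1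
      refine ⟨⟨hpS, ?_⟩, ?_⟩
      · show lam < h (Mbar I M p.2); rw [hMb]; exact h4
      · show ‖p.1‖ < (Ibar I (Mbar I M p.2) / omegaBall (n-1)) ^ (1 / ((n:ℝ) - 1))
        rw [hIb]; exact h3
    · rintro ⟨⟨hpS, h4⟩, h3⟩
      have hMb := hMbS p.2 hpS
      have hIb : Ibar I (Mbar I M p.2) = I (M p.2) := by
        rw [hMb]; exact hIbeq _ (hMmem p.2 hpS).1
      refine ⟨⟨hpS.1, hpS.2, ?_⟩, ?_⟩
      · rw [← hIb]; exact h3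
      · rw [← hMb]; exact h4
  -- geometry of the slices
  haveI : Nontrivial (EuclideanSpace ℝ (Fin (n - 1))) := by
    apply Module.nontrivial_of_finrank_pos (R := ℝ)
    rw [finrank_euclideanSpace_fin]
    omega
  have hballlt : volume (Metric.ball (0 : EuclideanSpace ℝ (Fin (n-1))) 1) < ⊤ :=
    measure_ball_lt_top
  have hω : 0 < omegaBall (n-1) :=
    ENNReal.toReal_pos (Metric.measure_ball_pos volume _ one_pos).ne' hballlt.ne
  have hωball : ENNReal.ofReal (omegaBall (n-1))
      = volume (Metric.ball (0 : EuclideanSpace ℝ (Fin (n-1))) 1) :=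
    ENNReal.ofReal_toReal hballlt.ne
  have hslice : ∀ t : ℝ, volume ((fun x : EuclideanSpace ℝ (Fin (n-1)) => (x, t)) ⁻¹' B)
      = D.indicator (fun u => ENNReal.ofReal (I (M u))) t := by
    intro t
    by_cases htD : t ∈ D
    · have htS : t ∈ S := hDS htD
      have hIMpos : 0 < I (M t) := hIpos _ (hMmem t htS).1
      have hc : 0 < I (M t) / omegaBall (n-1) := div_pos hIMpos hω
      have hρt : ρ t = (I (M t) / omegaBall (n-1)) ^ (1 / ((n:ℝ) - 1)) := by
        simp only [hρdef]
        rw [hMbS t htS, hIbeq _ (hMmem t htS).1]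
      have hpre : (fun x : EuclideanSpace ℝ (Fin (n-1)) => (x, t)) ⁻¹' B
          = Metric.ball 0 (ρ t) := by
        ext x
        simp only [hBdef, Set.mem_preimage, Set.mem_setOf_eq, mem_ball_zero_iff]
        exact and_iff_right htD
      rw [hpre, Set.indicator_of_mem htD]
      rw [Measure.addHaar_ball _ _ (by rw [hρt]; exact Real.rpow_nonneg hc.le _),
        finrank_euclideanSpace_fin]
      have hpow : ρ t ^ (n - 1 : ℕ) = I (M t) / omegaBall (n-1) := by
        rw [hρt, ← Real.rpow_natCast ((I (M t) / omegaBall (n-1)) ^ (1 / ((n:ℝ) - 1))) (n-1),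
          ← Real.rpow_mul hc.le, hnR, one_div_mul_cancel hnne, Real.rpow_one]
      rw [hpow, ← hωball, ← ENNReal.ofReal_mul (div_nonneg hIMpos.le hω.le),
        div_mul_cancel₀ _ hω.ne']
    · have hpre : (fun x : EuclideanSpace ℝ (Fin (n-1)) => (x, t)) ⁻¹' B = ∅ := by
        ext x
        simp only [hBdef, Set.mem_preimage, Set.mem_setOf_eq, Set.mem_empty_iff_false,
          iff_false]
        exact fun hcon => htD hcon.1
      rw [hpre, Set.indicator_of_notMem htD, measure_empty]
  have hvolB : volume B = ∫⁻ t in D, ENNReal.ofReal (I (M t)) := by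
    rw [Measure.volume_eq_prod, Measure.prod_apply_symm hBmeas]
    simp_rw [hslice]
    rw [lintegral_indicator hDmeas]
  -- change of variables
  set g : ℝ → ℝ≥0∞ := fun u => Set.indicator {v : ℝ | lam < h v} (fun _ => (1:ℝ≥0∞)) u
    with hgdef
  have hTmeas : MeasurableSet {v : ℝ | lam < h v} := measurableSet_lt measurable_const hmeas
  have hCoV : ∫⁻ x in M '' S, g x = ∫⁻ t in S, ENNReal.ofReal |(-(I (M t)))| * g (M t) := by
    simpa only [ContinuousLinearMap.det_toSpanSingleton] using
      lintegral_image_eq_lintegral_abs_det_fderiv_mul volume hSmeas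
        (fun t ht => (hMderiv t ht).hasFDerivWithinAt) hMinj g
  have hL : ∫⁻ x in Set.Ioo (0:ℝ) 1, g x = volume {t ∈ Set.Ioo (0:ℝ) 1 | lam < h t} := by
    simp only [hgdef]
    rw [lintegral_indicator hTmeas, setLIntegral_one, Measure.restrict_apply hTmeas]
    congr 1
    ext x
    simp only [Set.mem_inter_iff, Set.mem_setOf_eq, Set.mem_Ioo]
    exact and_comm
  have hR : ∫⁻ t in S, ENNReal.ofReal |(-(I (M t)))| * g (M t)
      = ∫⁻ t in D, ENNReal.ofReal (I (M t)) := by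
    have hpt : ∀ t ∈ S, ENNReal.ofReal |(-(I (M t)))| * g (M t)
        = D.indicator (fun u => ENNReal.ofReal (I (M u))) t := by
      intro t ht
      have hIMpos : 0 < I (M t) := hIpos _ (hMmem t ht).1
      have habs : |(-(I (M t)))| = I (M t) := by rw [abs_neg, abs_of_pos hIMpos]
      by_cases hl : lam < h (M t)
      · have htD : t ∈ D := ⟨ht, by show lam < h (Mbar I M t); rw [hMbS t ht]; exact hl⟩
        rw [Set.indicator_of_mem htD]
        simp only [hgdef]
        rw [Set.indicator_of_mem (show M t ∈ {v : ℝ | lam < h v} from hl), mul_one, habs]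
      · have htD : t ∉ D := by
          intro hcon
          apply hl
          have h2 : lam < h (Mbar I M t) := hcon.2
          rwa [hMbS t ht] at h2
        rw [Set.indicator_of_notMem htD]
        simp only [hgdef]
        rw [Set.indicator_of_notMem (show M t ∉ {v : ℝ | lam < h v} from hl), mul_zero]
    rw [setLIntegral_congr_fun hSmeas hpt]
    rw [lintegral_indicator hDmeas, Measure.restrict_restrict hDmeas,
      Set.inter_eq_self_of_subset_left hDS]
  rw [hAB, hvolB, ← hR, ← hCoV, himg]
  exact hL
end

section
/- Let (Ω, μ) be a measure space with 0 < μ(Ω) < ∞. Let Z be a set of measurable real-valued functions on Ω that is closed under pointwise multiplication, equipped with a functional ‖·‖_Z : Z → [0,∞), and suppose there exist constants C > 0 and C' > 0 such that ‖uv‖_Z ≤ C ‖u‖_Z ‖v‖_Z for all u, v ∈ Z, and λ · μ({x ∈ Ω : |u(x)| > λ}) ≤ C' ‖u‖_Z for every u ∈ Z and every λ > 0. Then every u ∈ Z is essentially bounded, with ess sup_{Ω} |u| ≤ 2C ‖u‖_Z. -/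
open MeasureTheory

/-- a multiplicatively closed class of functions, normed so that products are
controlled and embedded into weak-L¹, embeds into L^∞, with `ess sup |u| ≤ 2C‖u‖_Z`. -/
theorem banach_algebra_embeds_into_Linfty
    {Ω : Type*} [MeasurableSpace Ω] (μ : Measure Ω)
    (hμpos : 0 < μ Set.univ) (hμfin : μ Set.univ < ⊤)
    (Z : Set (Ω → ℝ)) (hZmeas : ∀ u ∈ Z, Measurable u)
    (hZmul : ∀ u ∈ Z, ∀ v ∈ Z, (fun x => u x * v x) ∈ Z)
    (nrm : (Ω → ℝ) → ℝ) (hnrm_nonneg : ∀ u ∈ Z, 0 ≤ nrm u)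
    (C C' : ℝ) (hC : 0 < C) (hC' : 0 < C')
    (hsubmult : ∀ u ∈ Z, ∀ v ∈ Z, nrm (fun x => u x * v x) ≤ C * nrm u * nrm v)
    (hweak : ∀ u ∈ Z, ∀ lam : ℝ, 0 < lam →
      ENNReal.ofReal lam * μ {x | lam < |u x|} ≤ ENNReal.ofReal (C' * nrm u)) :
    ∀ u ∈ Z, ∀ᵐ x ∂μ, |u x| ≤ 2 * C * nrm u := by
  intro u hu
  rcases eq_or_lt_of_le (hnrm_nonneg u hu) with h0 | hpos
  · -- case nrm u = 0
    have hz : ∀ lam : ℝ, 0 < lam → μ {x | lam < |u x|} = 0 := by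
      intro lam hlam
      have h := hweak u hu lam hlam
      rw [← h0, mul_zero, ENNReal.ofReal_zero, nonpos_iff_eq_zero, mul_eq_zero] at h
      rcases h with h | h
      · exact absurd h (by simp [ENNReal.ofReal_eq_zero, not_le, hlam])
      · exact h
    have hnull : μ {x | 0 < |u x|} = 0 := by
      have hsub : {x | 0 < |u x|} ⊆ ⋃ k : ℕ, {x | (1/(k+1) : ℝ) < |u x|} := by
        intro x hx
        simp only [Set.mem_setOf_eq] at hx
        obtain ⟨k, hk⟩ := exists_nat_one_div_lt (ε := |u x|) hx
        exact Set.mem_iUnion.mpr ⟨k, hk⟩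
      exact measure_mono_null hsub (measure_iUnion_null fun k => hz _ (by positivity))
    have h2 : 2 * C * nrm u = 0 := by rw [← h0]; ring
    rw [ae_iff]
    simpa only [not_le, h2] using hnull
  · -- case nrm u > 0
    set t := 2 * C * nrm u with htdef
    have ht : 0 < t := by positivity
    have hpow : ∀ n : ℕ, (fun x => (u x)^(n+1)) ∈ Z ∧
        nrm (fun x => (u x)^(n+1)) ≤ C^n * (nrm u)^(n+1) := by
      intro n
      induction n with
      | zero =>
        simp only [zero_add, pow_one, pow_zero, one_mul]
        exact ⟨hu, le_refl _⟩
      | succ n ih =>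
        obtain ⟨hmem, hle⟩ := ih
        have hmem' : (fun x => (u x)^(n+1) * u x) ∈ Z := hZmul _ hmem u hu
        have heqf : (fun x => (u x)^(n+1+1)) = (fun x => (u x)^(n+1) * u x) := by
          funext x; ring
        constructor
        · rw [heqf]; exact hmem'
        · calc nrm (fun x => (u x)^(n+1+1)) = nrm (fun x => (u x)^(n+1) * u x) := by rw [heqf]
            _ ≤ C * nrm (fun x => (u x)^(n+1)) * nrm u := hsubmult _ hmem u hu
            _ ≤ C * (C^n * nrm u^(n+1)) * nrm u := by
                apply mul_le_mul_of_nonneg_right _ (le_of_lt hpos)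
                exact mul_le_mul_of_nonneg_left hle (le_of_lt hC)
            _ = C^(n+1) * nrm u^(n+1+1) := by ring
    set S := {x | t < |u x|} with hSdef
    have hbound : ∀ n : ℕ, μ S ≤ ENNReal.ofReal (C' / (2^(n+1) * C)) := by
      intro n
      obtain ⟨hmem, hle⟩ := hpow n
      have ht' : (0:ℝ) < t^(n+1) := by positivity
      have hw := hweak _ hmem (t^(n+1)) ht'
      have hsub : S ⊆ {x | t^(n+1) < |(u x)^(n+1)|} := by
        intro x hx
        simp only [Set.mem_setOf_eq, abs_pow]
        exact pow_lt_pow_left₀ hx (le_of_lt ht) (Nat.succ_ne_zero n)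
      have h1 : ENNReal.ofReal (t^(n+1)) * μ S ≤
          ENNReal.ofReal (C' * (C^n * nrm u^(n+1))) := by
        refine le_trans (mul_le_mul_right (measure_mono hsub) _) (le_trans hw ?_)
        exact ENNReal.ofReal_le_ofReal (mul_le_mul_of_nonneg_left hle (le_of_lt hC'))
      have h2 : μ S ≤ ENNReal.ofReal (C' * (C^n * nrm u^(n+1))) / ENNReal.ofReal (t^(n+1)) := by
        rw [ENNReal.le_div_iff_mul_le
          (Or.inl (by simp [ENNReal.ofReal_eq_zero, not_le, ht']))
          (Or.inl ENNReal.ofReal_ne_top)]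
        rwa [mul_comm]
      rw [← ENNReal.ofReal_div_of_pos ht'] at h2
      have heq : C' * (C^n * nrm u^(n+1)) / t^(n+1) = C' / (2^(n+1) * C) := by
        rw [htdef, mul_pow, mul_pow]
        field_simp
        ring
      rwa [heq] at h2
    have hfin : μ S ≠ ⊤ := (lt_of_le_of_lt (measure_mono (Set.subset_univ S)) hμfin).ne
    have hr : ∀ n : ℕ, (μ S).toReal ≤ C' / (2^(n+1) * C) := by
      intro n
      refine le_trans (ENNReal.toReal_mono ENNReal.ofReal_ne_top (hbound n)) ?_
      rw [ENNReal.toReal_ofReal (by positivity)]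
    have htend : Filter.Tendsto (fun n : ℕ => C' / (2^(n+1) * C)) Filter.atTop (nhds 0) := by
      have h2 : Filter.Tendsto (fun n : ℕ => ((1:ℝ)/2)^n) Filter.atTop (nhds 0) :=
        tendsto_pow_atTop_nhds_zero_of_lt_one (by norm_num) (by norm_num)
      have heq : (fun n : ℕ => C' / (2^(n+1) * C)) = fun n => (C'/(2*C)) * ((1:ℝ)/2)^n := by
        funext n
        rw [div_pow, one_pow, div_mul_div_comm, mul_one, pow_succ]
        rw [show (2:ℝ)*C*2^n = 2^n*2*C by ring]
      rw [heq]
      simpa using h2.const_mul (C'/(2*C))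
    have hle0 : (μ S).toReal ≤ 0 := ge_of_tendsto' htend hr
    have htr0 : (μ S).toReal = 0 := le_antisymm hle0 ENNReal.toReal_nonneg
    have hS0 : μ S = 0 := (ENNReal.toReal_eq_zero_iff _).mp htr0 |>.resolve_right hfin
    rw [ae_iff]
    simpa only [not_le] using hS0
end

section
/- Let I be a positive nondecreasing function on (0,1), let m ∈ ℕ, m ≥ 1, and let g be a nonnegative measurable function on (0,1). Then, with values in [0,∞], H_I^m g(t) = (1/(m−1)!) ∫_t^1 (g(s)/I(s)) (∫_t^s dr/I(r))^{m−1} ds for every t ∈ (0,1). -/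
open MeasureTheory ENNReal NNReal

/-- The Hardy-type operator `H_I g (t) = ∫_t^1 g(r)/I(r) dr`, acting on nonnegative
measurable functions on `(0,1)`, realized as `[0,∞]`-valued functions on `ℝ`. -/
noncomputable def HI (I : ℝ → ℝ) (g : ℝ → ℝ≥0∞) : ℝ → ℝ≥0∞ :=
  fun t => ∫⁻ r in Set.Ioo t 1, g r / ENNReal.ofReal (I r)

/-- A rearrangement-invariant function norm on `(0,1)`. -/
structure RINorm where
  N : (ℝ → ℝ≥0∞) → ℝ≥0∞
  eq_zero_iff : ∀ f : ℝ → ℝ≥0∞, Measurable f →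
    (N f = 0 ↔ ∀ᵐ t ∂(volume.restrict (Set.Ioo (0:ℝ) 1)), f t = 0)
  smul_eq : ∀ f : ℝ → ℝ≥0∞, Measurable f → ∀ c : ℝ≥0,
    N (fun t => (c : ℝ≥0∞) * f t) = (c : ℝ≥0∞) * N f
  add_le : ∀ f g : ℝ → ℝ≥0∞, Measurable f → Measurable g →
    N (fun t => f t + g t) ≤ N f + N g
  mono : ∀ f g : ℝ → ℝ≥0∞, Measurable f → Measurable g →
    (∀ᵐ t ∂(volume.restrict (Set.Ioo (0:ℝ) 1)), f t ≤ g t) → N f ≤ N g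
  fatou : ∀ (f : ℕ → ℝ → ℝ≥0∞) (g : ℝ → ℝ≥0∞),
    (∀ j, Measurable (f j)) → Measurable g →
    (∀ j t, f j t ≤ f (j + 1) t) →
    (∀ᵐ t ∂(volume.restrict (Set.Ioo (0:ℝ) 1)), (⨆ j, f j t) = g t) →
    (⨆ j, N (f j)) = N g
  chi_lt_top : N ((Set.Ioo (0:ℝ) 1).indicator fun _ => 1) < ⊤
  lintegral_le : ∃ c : ℝ≥0, 0 < c ∧ ∀ f : ℝ → ℝ≥0∞, Measurable f →
    (∫⁻ t in Set.Ioo (0:ℝ) 1, f t) ≤ (c : ℝ≥0∞) * N f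
  equimeasurable : ∀ f g : ℝ → ℝ≥0∞, Measurable f → Measurable g →
    (∀ lam : ℝ≥0∞, 0 < lam →
      volume {t ∈ Set.Ioo (0:ℝ) 1 | lam < f t}
        = volume {t ∈ Set.Ioo (0:ℝ) 1 | lam < g t}) →
    N f = N g

noncomputable def HWop (W : ℝ → ℝ≥0∞) (g : ℝ → ℝ≥0∞) : ℝ → ℝ≥0∞ :=
  fun t => ∫⁻ r in Set.Ioo t 1, g r * W r

/-- Tonelli swap over the triangle `a < r < x < b`. -/
lemma swap2 (k : ℝ → ℝ → ℝ≥0∞) (hk : Measurable (Function.uncurry k)) (a b : ℝ) :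
    ∫⁻ r in Set.Ioo a b, ∫⁻ x in Set.Ioo r b, k r x
      = ∫⁻ x in Set.Ioo a b, ∫⁻ r in Set.Ioo a x, k r x := by
  have hS : MeasurableSet {p : ℝ × ℝ | p.1 < p.2} :=
    measurableSet_lt measurable_fst measurable_snd
  set f : ℝ × ℝ → ℝ≥0∞ := ({p : ℝ × ℝ | p.1 < p.2}).indicator (Function.uncurry k) with hf
  have hfm : Measurable f := hk.indicator hS
  have h1 : ∫⁻ r in Set.Ioo a b, ∫⁻ x in Set.Ioo r b, k r x
      = ∫⁻ r in Set.Ioo a b, ∫⁻ x in Set.Ioo a b, f (r, x) := by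
    refine setLIntegral_congr_fun measurableSet_Ioo (fun r hr => ?_)
    have hset : Set.Ioi r ∩ Set.Ioo a b = Set.Ioo r b := by
      ext x
      simp only [Set.mem_inter_iff, Set.mem_Ioi, Set.mem_Ioo]
      constructor
      · rintro ⟨h1, _, h3⟩; exact ⟨h1, h3⟩
      · rintro ⟨h1, h2⟩; exact ⟨h1, hr.1.trans h1, h2⟩
    have hfx : ∀ x, f (r, x) = (Set.Ioi r).indicator (k r) x := fun x => by
      simp [hf, Set.indicator_apply, Function.uncurry, Set.mem_Ioi]
    calc ∫⁻ x in Set.Ioo r b, k r x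
        = ∫⁻ x in Set.Ioi r ∩ Set.Ioo a b, k r x := by rw [hset]
      _ = ∫⁻ x in Set.Ioi r, k r x ∂(volume.restrict (Set.Ioo a b)) := by
            rw [Measure.restrict_restrict measurableSet_Ioi]
      _ = ∫⁻ x in Set.Ioo a b, (Set.Ioi r).indicator (k r) x := by
            rw [lintegral_indicator measurableSet_Ioi]
      _ = ∫⁻ x in Set.Ioo a b, f (r, x) := by simp_rw [hfx]
  have h3 : ∫⁻ x in Set.Ioo a b, ∫⁻ r in Set.Ioo a b, f (r, x)
      = ∫⁻ x in Set.Ioo a b, ∫⁻ r in Set.Ioo a x, k r x := by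
    refine setLIntegral_congr_fun measurableSet_Ioo (fun x hx => ?_)
    have hset : Set.Iio x ∩ Set.Ioo a b = Set.Ioo a x := by
      ext r
      simp only [Set.mem_inter_iff, Set.mem_Iio, Set.mem_Ioo]
      constructor
      · rintro ⟨h1, h2, _⟩; exact ⟨h2, h1⟩
      · rintro ⟨h1, h2⟩; exact ⟨h2, h1, h2.trans hx.2⟩
    have hfr : ∀ r, f (r, x) = (Set.Iio x).indicator (fun r => k r x) r := fun r => by
      simp [hf, Set.indicator_apply, Function.uncurry, Set.mem_Iio]
    calc ∫⁻ r in Set.Ioo a b, f (r, x)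
        = ∫⁻ r in Set.Ioo a b, (Set.Iio x).indicator (fun r => k r x) r := by simp_rw [hfr]
      _ = ∫⁻ r in Set.Iio x, k r x ∂(volume.restrict (Set.Ioo a b)) := by
            rw [lintegral_indicator measurableSet_Iio]
      _ = ∫⁻ r in Set.Iio x ∩ Set.Ioo a b, k r x := by
            rw [Measure.restrict_restrict measurableSet_Iio]
      _ = ∫⁻ r in Set.Ioo a x, k r x := by rw [hset]
  have h2 : ∫⁻ r in Set.Ioo a b, ∫⁻ x in Set.Ioo a b, f (r, x)
      = ∫⁻ x in Set.Ioo a b, ∫⁻ r in Set.Ioo a b, f (r, x) := by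
    have huc : Function.uncurry (fun r x => f (r, x)) = f := by
      ext p; simp [Function.uncurry]
    exact lintegral_lintegral_swap (by rw [huc]; exact hfm.aemeasurable)
  rw [h1, h2, h3]


lemma kern (W : ℝ → ℝ≥0∞) (hW : Measurable W) (b : ℝ) (n : ℕ) :
    ∀ a : ℝ, (∫⁻ r in Set.Ioo a b, W r) ≠ ∞ →
      ((n : ℝ≥0∞) + 1) * ∫⁻ r in Set.Ioo a b, W r * (∫⁻ x in Set.Ioo r b, W x) ^ n
        = (∫⁻ r in Set.Ioo a b, W r) ^ (n + 1) := by
  induction n with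
  | zero => intro a _; simp
  | succ n ih =>
    intro a ha
    set F : ℝ → ℝ≥0∞ := fun r => ∫⁻ x in Set.Ioo r b, W x with hFdef
    have hFanti : Antitone F := fun r r' h =>
      lintegral_mono_set (Set.Ioo_subset_Ioo_left h)
    have hFm : Measurable F := hFanti.measurable
    have hFle : ∀ r, a ≤ r → F r ≤ F a := fun r h => hFanti h
    have hc : Measurable fun x => W x * F x ^ n := hW.mul (hFm.pow_const n)
    have hG : Measurable fun x => ∫⁻ r in Set.Ioo a x, W r :=
      Monotone.measurable fun x x' h => lintegral_mono_set (Set.Ioo_subset_Ioo_right h)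
    have ihF : ∀ r, F r ≠ ∞ →
        ((n : ℝ≥0∞) + 1) * ∫⁻ x in Set.Ioo r b, W x * F x ^ n = F r ^ (n + 1) :=
      fun r hr => ih r hr
    have hsplit : ∀ x ∈ Set.Ioo a b, (∫⁻ r in Set.Ioo a x, W r) + F x = F a := by
      intro x hx
      have h1 : ∫⁻ r in Set.Ico x b, W r = F x :=
        setLIntegral_congr (Ioo_ae_eq_Ico (a := x) (b := b)).symm
      have hdisj : Disjoint (Set.Ioo a x) (Set.Ico x b) :=
        Set.disjoint_left.mpr fun r hr hr' => lt_irrefl x (hr'.1.trans_lt hr.2)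
      calc (∫⁻ r in Set.Ioo a x, W r) + F x
          = (∫⁻ r in Set.Ioo a x, W r) + ∫⁻ r in Set.Ico x b, W r := by rw [h1]
        _ = ∫⁻ r in Set.Ioo a x ∪ Set.Ico x b, W r :=
            (lintegral_union measurableSet_Ico hdisj).symm
        _ = F a := by rw [Set.Ioo_union_Ico_eq_Ioo hx.1 hx.2.le]
    have hT : ∫⁻ r in Set.Ioo a b, W r * F r ^ (n + 1)
        = ((n : ℝ≥0∞) + 1) * ∫⁻ x in Set.Ioo a b,
            (∫⁻ r in Set.Ioo a x, W r) * (W x * F x ^ n) := by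
      have e1 : ∫⁻ r in Set.Ioo a b, W r * F r ^ (n + 1)
          = ∫⁻ r in Set.Ioo a b,
              ((n : ℝ≥0∞) + 1) * (W r * ∫⁻ x in Set.Ioo r b, W x * F x ^ n) := by
        refine setLIntegral_congr_fun measurableSet_Ioo
          (fun r hr => ?_)
        have hFr : F r ≠ ∞ := ((hFle r hr.1.le).trans_lt (lt_top_iff_ne_top.mpr ha)).ne
        rw [← ihF r hFr]
        ring
      rw [e1, lintegral_const_mul' _ _ (by simp : ((n : ℝ≥0∞) + 1) ≠ ∞)]
      congr 1
      have e2 : ∫⁻ r in Set.Ioo a b, W r * ∫⁻ x in Set.Ioo r b, (W x * F x ^ n)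
          = ∫⁻ r in Set.Ioo a b, ∫⁻ x in Set.Ioo r b, W r * (W x * F x ^ n) := by
        refine setLIntegral_congr_fun measurableSet_Ioo
          (fun r _ => ?_)
        exact (lintegral_const_mul (W r) hc).symm
      have hk : Measurable (Function.uncurry fun r x => W r * (W x * F x ^ n)) :=
        (hW.comp measurable_fst).mul
          ((hW.comp measurable_snd).mul ((hFm.comp measurable_snd).pow_const n))
      rw [e2, swap2 (fun r x => W r * (W x * F x ^ n)) hk a b]
      refine setLIntegral_congr_fun measurableSet_Ioo
        (fun x _ => ?_)
      exact lintegral_mul_const _ hW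
    have hTJ : (∫⁻ x in Set.Ioo a b, (∫⁻ r in Set.Ioo a x, W r) * (W x * F x ^ n))
        + ∫⁻ r in Set.Ioo a b, W r * F r ^ (n + 1)
        = F a * ∫⁻ x in Set.Ioo a b, W x * F x ^ n := by
      have hJ : ∫⁻ r in Set.Ioo a b, W r * F r ^ (n + 1)
          = ∫⁻ x in Set.Ioo a b, F x * (W x * F x ^ n) := by
        refine setLIntegral_congr_fun measurableSet_Ioo
          (fun x _ => by ring)
      rw [hJ, ← lintegral_add_left (f := fun x => (∫⁻ r in Set.Ioo a x, W r) * (W x * F x ^ n)) (hG.mul hc)]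
      have hpt : ∀ x ∈ Set.Ioo a b,
          (∫⁻ r in Set.Ioo a x, W r) * (W x * F x ^ n) + F x * (W x * F x ^ n)
            = F a * (W x * F x ^ n) := by
        intro x hx; rw [← add_mul, hsplit x hx]
      rw [setLIntegral_congr_fun measurableSet_Ioo (hpt),
        lintegral_const_mul' _ _ ha]
    have iha := ih a ha
    calc ((↑(n + 1) : ℝ≥0∞) + 1) * ∫⁻ r in Set.Ioo a b, W r * F r ^ (n + 1)
        = ((n : ℝ≥0∞) + 1) * (∫⁻ r in Set.Ioo a b, W r * F r ^ (n + 1))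
            + (∫⁻ r in Set.Ioo a b, W r * F r ^ (n + 1)) := by push_cast; ring
      _ = ((n : ℝ≥0∞) + 1) * (∫⁻ r in Set.Ioo a b, W r * F r ^ (n + 1))
            + ((n : ℝ≥0∞) + 1) * ∫⁻ x in Set.Ioo a b,
                (∫⁻ r in Set.Ioo a x, W r) * (W x * F x ^ n) := by rw [← hT]
      _ = ((n : ℝ≥0∞) + 1) * ((∫⁻ x in Set.Ioo a b,
                (∫⁻ r in Set.Ioo a x, W r) * (W x * F x ^ n))
            + ∫⁻ r in Set.Ioo a b, W r * F r ^ (n + 1)) := by ring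
      _ = ((n : ℝ≥0∞) + 1) * (F a * ∫⁻ x in Set.Ioo a b, W x * F x ^ n) := by rw [hTJ]
      _ = F a * (((n : ℝ≥0∞) + 1) * ∫⁻ x in Set.Ioo a b, W x * F x ^ n) := by ring
      _ = F a * F a ^ (n + 1) := by rw [iha]
      _ = F a ^ (n + 1 + 1) := by ring

lemma hardy_aux (W : ℝ → ℝ≥0∞) (hW : Measurable W)
    (hfin : ∀ t ∈ Set.Ioo (0:ℝ) 1, (∫⁻ r in Set.Ioo t 1, W r) ≠ ∞)
    (g : ℝ → ℝ≥0∞) (hg : Measurable g) (n : ℕ) :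
    ∀ t ∈ Set.Ioo (0:ℝ) 1,
      (n.factorial : ℝ≥0∞) * (HWop W)^[n + 1] g t
        = ∫⁻ s in Set.Ioo t 1, (g s * W s) * (∫⁻ r in Set.Ioo t s, W r) ^ n := by
  induction n with
  | zero =>
    intro t ht
    simp only [Nat.factorial_zero, Nat.cast_one, one_mul, zero_add, Function.iterate_one,
      pow_zero, mul_one]
    rfl
  | succ n ih =>
    intro t ht
    have hAm : Measurable (fun p : ℝ × ℝ => ∫⁻ x in Set.Ioo p.1 p.2, W x) := by
      have h1 : ∀ p : ℝ × ℝ, (∫⁻ x in Set.Ioo p.1 p.2, W x)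
          = ∫⁻ x, (Set.Ioo p.1 p.2).indicator W x := by
        intro p; rw [lintegral_indicator measurableSet_Ioo]
      simp_rw [h1]
      apply Measurable.lintegral_prod_right (f := fun (p : ℝ × ℝ) x => (Set.Ioo p.1 p.2).indicator W x)
      have hset : MeasurableSet {q : (ℝ × ℝ) × ℝ | q.1.1 < q.2 ∧ q.2 < q.1.2} :=
        (measurableSet_lt (measurable_fst.comp measurable_fst) measurable_snd).inter
          (measurableSet_lt measurable_snd (measurable_snd.comp measurable_fst))
      have h2 : (Function.uncurry fun (p : ℝ × ℝ) (x : ℝ) => (Set.Ioo p.1 p.2).indicator W x)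
          = {q : (ℝ × ℝ) × ℝ | q.1.1 < q.2 ∧ q.2 < q.1.2}.indicator (fun q => W q.2) := by
        ext q
        simp [Function.uncurry, Set.indicator_apply, Set.mem_Ioo, Set.mem_setOf_eq]
      rw [h2]
      exact (hW.comp measurable_snd).indicator hset
    have h2 : (HWop W)^[n + 1 + 1] g t
        = ∫⁻ r in Set.Ioo t 1, ((HWop W)^[n + 1] g) r * W r := by
      rw [Function.iterate_succ_apply']; rfl
    have factsucc : ((n + 1).factorial : ℝ≥0∞)
        = ((n : ℝ≥0∞) + 1) * (n.factorial : ℝ≥0∞) := by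
      rw [Nat.factorial_succ]; push_cast; ring
    have e1 : (n.factorial : ℝ≥0∞) * ∫⁻ r in Set.Ioo t 1, ((HWop W)^[n + 1] g) r * W r
        = ∫⁻ r in Set.Ioo t 1,
            (∫⁻ s in Set.Ioo r 1, (g s * W s) * (∫⁻ x in Set.Ioo r s, W x) ^ n) * W r := by
      rw [← lintegral_const_mul' _ _ (by simp : (n.factorial : ℝ≥0∞) ≠ ∞)]
      refine setLIntegral_congr_fun measurableSet_Ioo
        (fun r hr => ?_)
      have hr01 : r ∈ Set.Ioo (0:ℝ) 1 := ⟨ht.1.trans hr.1, hr.2⟩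
      rw [← mul_assoc, ih r hr01]
    have e2 : ∫⁻ r in Set.Ioo t 1,
          (∫⁻ s in Set.Ioo r 1, (g s * W s) * (∫⁻ x in Set.Ioo r s, W x) ^ n) * W r
        = ∫⁻ r in Set.Ioo t 1, ∫⁻ s in Set.Ioo r 1,
            W r * ((g s * W s) * (∫⁻ x in Set.Ioo r s, W x) ^ n) := by
      refine setLIntegral_congr_fun measurableSet_Ioo
        (fun r _ => ?_)
      have hmono : Monotone fun s => ∫⁻ x in Set.Ioo r s, W x := fun s s' h =>
        lintegral_mono_set (Set.Ioo_subset_Ioo_right h)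
      have hm : Measurable fun s => (g s * W s) * (∫⁻ x in Set.Ioo r s, W x) ^ n :=
        (hg.mul hW).mul (hmono.measurable.pow_const n)
      rw [mul_comm]
      exact (lintegral_const_mul (W r) hm).symm
    have hk : Measurable (Function.uncurry fun r s =>
        W r * ((g s * W s) * (∫⁻ x in Set.Ioo r s, W x) ^ n)) :=
      (hW.comp measurable_fst).mul
        (((hg.comp measurable_snd).mul (hW.comp measurable_snd)).mul (hAm.pow_const n))
    have e3 := swap2 (fun r s => W r * ((g s * W s) * (∫⁻ x in Set.Ioo r s, W x) ^ n)) hk t 1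
    have e5 : ∫⁻ s in Set.Ioo t 1, ∫⁻ r in Set.Ioo t s,
          W r * ((g s * W s) * (∫⁻ x in Set.Ioo r s, W x) ^ n)
        = ∫⁻ s in Set.Ioo t 1, (g s * W s)
            * ∫⁻ r in Set.Ioo t s, W r * (∫⁻ x in Set.Ioo r s, W x) ^ n := by
      refine setLIntegral_congr_fun measurableSet_Ioo
        (fun s _ => ?_)
      have hanti : Antitone fun r => ∫⁻ x in Set.Ioo r s, W x := fun r r' h =>
        lintegral_mono_set (Set.Ioo_subset_Ioo_left h)
      have hm : Measurable fun r => W r * (∫⁻ x in Set.Ioo r s, W x) ^ n :=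
        hW.mul (hanti.measurable.pow_const n)
      rw [← lintegral_const_mul _ hm]
      refine setLIntegral_congr_fun measurableSet_Ioo
        (fun r _ => by ring)
    calc ((n + 1).factorial : ℝ≥0∞) * (HWop W)^[n + 1 + 1] g t
        = ((n : ℝ≥0∞) + 1) * ((n.factorial : ℝ≥0∞)
            * ∫⁻ r in Set.Ioo t 1, ((HWop W)^[n + 1] g) r * W r) := by
          rw [h2, factsucc, mul_assoc]
      _ = ((n : ℝ≥0∞) + 1) * ∫⁻ s in Set.Ioo t 1, (g s * W s)
            * ∫⁻ r in Set.Ioo t s, W r * (∫⁻ x in Set.Ioo r s, W x) ^ n := by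
          rw [e1, e2, e3, e5]
      _ = ∫⁻ s in Set.Ioo t 1, (g s * W s)
            * (((n : ℝ≥0∞) + 1) * ∫⁻ r in Set.Ioo t s, W r * (∫⁻ x in Set.Ioo r s, W x) ^ n) := by
          rw [← lintegral_const_mul' _ _ (by simp : ((n : ℝ≥0∞) + 1) ≠ ∞)]
          refine setLIntegral_congr_fun measurableSet_Ioo
            (fun s _ => by ring)
      _ = ∫⁻ s in Set.Ioo t 1, (g s * W s) * (∫⁻ r in Set.Ioo t s, W r) ^ (n + 1) := by
          refine setLIntegral_congr_fun measurableSet_Ioo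
            (fun s hs => ?_)
          have hfin' : (∫⁻ r in Set.Ioo t s, W r) ≠ ∞ :=
            fun h => hfin t ht (top_le_iff.mp (h ▸
              lintegral_mono_set (Set.Ioo_subset_Ioo_right hs.2.le)))
          rw [kern W hW s n t hfin']

lemma HI_iterate_eq (I : ℝ → ℝ) (W : ℝ → ℝ≥0∞)
    (hIW : ∀ r ∈ Set.Ioo (0:ℝ) 1, W r = (ENNReal.ofReal (I r))⁻¹) (g : ℝ → ℝ≥0∞) :
    ∀ k : ℕ, ∀ t ∈ Set.Ioo (0:ℝ) 1, (HI I)^[k] g t = (HWop W)^[k] g t := by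
  intro k
  induction k with
  | zero => intro t _; rfl
  | succ k ih =>
    intro t ht
    rw [Function.iterate_succ_apply', Function.iterate_succ_apply']
    have heq : ∫⁻ r in Set.Ioo t 1, (HI I)^[k] g r / ENNReal.ofReal (I r)
        = ∫⁻ r in Set.Ioo t 1, (HWop W)^[k] g r * W r := by
      refine setLIntegral_congr_fun measurableSet_Ioo
        (fun r hr => ?_)
      have hr01 : r ∈ Set.Ioo (0:ℝ) 1 := ⟨ht.1.trans hr.1, hr.2⟩
      rw [ih r hr01, hIW r hr01, div_eq_mul_inv]
    exact heq

/-- explicit kernel formula for the `m`-fold iterate of `H_I`: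
`H_I^m g (t) = (1/(m-1)!) ∫_t^1 (g(s)/I(s)) (∫_t^s dr/I(r))^{m-1} ds`. -/
theorem hardy_iterate_formula (I : ℝ → ℝ)
    (hIpos : ∀ t ∈ Set.Ioo (0:ℝ) 1, 0 < I t)
    (hImono : MonotoneOn I (Set.Ioo (0:ℝ) 1))
    (m : ℕ) (hm : 1 ≤ m) (g : ℝ → ℝ≥0∞) (hg : Measurable g) :
    ∀ t ∈ Set.Ioo (0:ℝ) 1,
      (HI I)^[m] g t
        = ((m - 1).factorial : ℝ≥0∞)⁻¹ *
            ∫⁻ s in Set.Ioo t 1,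
              (g s / ENNReal.ofReal (I s)) *
                (∫⁻ r in Set.Ioo t s, (ENNReal.ofReal (I r))⁻¹) ^ (m - 1) := by
  intro t ht
  obtain ⟨n, rfl⟩ : ∃ n, m = n + 1 := ⟨m - 1, (Nat.succ_pred_eq_of_pos hm).symm⟩
  set W : ℝ → ℝ≥0∞ :=
    fun r => if r ≤ 0 then ⊤ else if 1 ≤ r then 0 else (ENNReal.ofReal (I r))⁻¹ with hWdef
  have hIW : ∀ r ∈ Set.Ioo (0:ℝ) 1, W r = (ENNReal.ofReal (I r))⁻¹ := by
    intro r hr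
    rw [hWdef]
    simp only [if_neg (not_le.mpr hr.1), if_neg (not_le.mpr hr.2)]
  have hWanti : Antitone W := by
    intro r r' h
    rw [hWdef]
    by_cases h1 : r ≤ 0
    · simp only [if_pos h1]; exact le_top
    · have h1' : ¬ r' ≤ 0 := fun hc => h1 (h.trans hc)
      simp only [if_neg h1, if_neg h1']
      by_cases h2 : 1 ≤ r'
      · simp only [if_pos h2]; exact zero_le
      · have h2' : ¬ 1 ≤ r := fun hc => h2 (hc.trans h)
        simp only [if_neg h2, if_neg h2']
        exact ENNReal.inv_le_inv.mpr (ENNReal.ofReal_le_ofReal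
          (hImono ⟨not_le.mp h1, not_le.mp h2'⟩ ⟨not_le.mp h1', not_le.mp h2⟩ h))
  have hWm : Measurable W := hWanti.measurable
  have hfin : ∀ u ∈ Set.Ioo (0:ℝ) 1, (∫⁻ r in Set.Ioo u 1, W r) ≠ ∞ := by
    intro u hu
    have hb : ∀ r ∈ Set.Ioo u 1, W r ≤ (ENNReal.ofReal (I u))⁻¹ := by
      intro r hr
      have hr01 : r ∈ Set.Ioo (0:ℝ) 1 := ⟨hu.1.trans hr.1, hr.2⟩
      rw [hIW r hr01]
      exact ENNReal.inv_le_inv.mpr (ENNReal.ofReal_le_ofReal (hImono hu hr01 hr.1.le))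
    have hle : (∫⁻ r in Set.Ioo u 1, W r) ≤ (ENNReal.ofReal (I u))⁻¹ * volume (Set.Ioo u 1) := by
      calc ∫⁻ r in Set.Ioo u 1, W r
          ≤ ∫⁻ _ in Set.Ioo u 1, (ENNReal.ofReal (I u))⁻¹ :=
            setLIntegral_mono' measurableSet_Ioo hb
        _ = (ENNReal.ofReal (I u))⁻¹ * volume (Set.Ioo u 1) := setLIntegral_const _ _
    refine (hle.trans_lt (ENNReal.mul_lt_top ?_ ?_)).ne
    · exact ENNReal.inv_lt_top.mpr (ENNReal.ofReal_pos.mpr (hIpos u hu))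
    · rw [Real.volume_Ioo]; exact ENNReal.ofReal_lt_top
  have key := hardy_aux W hWm hfin g hg n t ht
  have transfer := HI_iterate_eq I W hIW g (n + 1) t ht
  have hRHS : (∫⁻ s in Set.Ioo t 1,
        (g s / ENNReal.ofReal (I s)) * (∫⁻ r in Set.Ioo t s, (ENNReal.ofReal (I r))⁻¹) ^ n)
      = ∫⁻ s in Set.Ioo t 1, (g s * W s) * (∫⁻ r in Set.Ioo t s, W r) ^ n := by
    refine setLIntegral_congr_fun measurableSet_Ioo
      (fun s hs => ?_)
    have hs01 : s ∈ Set.Ioo (0:ℝ) 1 := ⟨ht.1.trans hs.1, hs.2⟩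
    have hinner : (∫⁻ r in Set.Ioo t s, (ENNReal.ofReal (I r))⁻¹)
        = ∫⁻ r in Set.Ioo t s, W r :=
      setLIntegral_congr_fun measurableSet_Ioo (fun r hr =>
        (hIW r ⟨ht.1.trans hr.1, hr.2.trans hs.2⟩).symm)
    rw [hinner, hIW s hs01, div_eq_mul_inv]
  simp only [Nat.add_sub_cancel]
  rw [hRHS, ← key, transfer, ← mul_assoc,
    ENNReal.inv_mul_cancel (Nat.cast_ne_zero.mpr n.factorial_ne_zero) (natCast_ne_top _), one_mul]
end

section
/- Let I : (0,1] → (0,∞) be continuous and nondecreasing, L = ∫_0^1 dr/I(r) ∈ (0,∞], and M : [0,L) → (0,1] the function determined by ∫_{M(t)}^1 dr/I(r) = t. Let m ∈ ℕ, m ≥ 2, and let f : (0,1) → [0,∞) be measurable with H_I f(t) < ∞ for every t ∈ (0,1). Define v : (0,L) → [0,∞) by v(t) = H_I^m f(M(t)). Then for every k ∈ ℕ with 1 ≤ k ≤ m−1, the function v is k-times continuously differentiable on (0,L) and its k-th derivative satisfies v^{(k)}(t) = H_I^{m−k} f(M(t)) for every t ∈ (0,L). -/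
open MeasureTheory ENNReal NNReal

/-- The real-valued Hardy-type operator `H_I g (t) = ∫_t^1 g(r)/I(r) dr`. -/
noncomputable def HIr (I : ℝ → ℝ) (g : ℝ → ℝ) : ℝ → ℝ :=
  fun t => ∫ r in Set.Ioo t 1, g r / I r

open Set Filter

lemma FIoo_eq_interval {h : ℝ → ℝ} {a y : ℝ} (hy : a ≤ y) (hy1 : y ≤ 1) :
    (∫ r in Set.Ioo y 1, h r) = ∫ r in y..(1:ℝ), (Set.Ioo a 1).indicator h r := by
  rw [intervalIntegral.integral_of_le hy1, integral_Ioc_eq_integral_Ioo]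
  exact setIntegral_congr_fun measurableSet_Ioo
    (fun r hr => (Set.indicator_of_mem (show r ∈ Set.Ioo a 1 from ⟨lt_of_le_of_lt hy hr.1, hr.2⟩) h).symm)

lemma hasDerivAt_FIoo {h : ℝ → ℝ}
    (hint : ∀ x ∈ Set.Ioo (0:ℝ) 1, IntegrableOn h (Set.Ioo x 1) volume)
    (hcont : ContinuousOn h (Set.Ioo (0:ℝ) 1)) :
    ∀ x ∈ Set.Ioo (0:ℝ) 1, HasDerivAt (fun y => ∫ r in Set.Ioo y 1, h r) (-h x) x := by
  intro x hx
  have ha : x/2 ∈ Set.Ioo (0:ℝ) 1 := ⟨by linarith [hx.1], by linarith [hx.1, hx.2]⟩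
  have hax : x/2 < x := by linarith [hx.1]
  set a := x/2 with ha'
  set h' := (Set.Ioo a 1).indicator h with hh'def
  have hh' : Integrable h' volume := (integrable_indicator_iff measurableSet_Ioo).2 (hint a ha)
  have hmemx : Set.Ioo a 1 ∈ nhds x := Ioo_mem_nhds hax hx.2
  have heq : h' =ᶠ[nhds x] h :=
    Filter.eventually_of_mem hmemx (fun y hy => Set.indicator_of_mem (show y ∈ Set.Ioo a 1 from hy) h)
  have hcx : ContinuousAt h' x :=
    (hcont.continuousAt (Ioo_mem_nhds hx.1 hx.2)).congr heq.symm
  have hD : HasDerivAt (fun u => ∫ r in u..(1:ℝ), h' r) (-h' x) x :=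
    intervalIntegral.integral_hasDerivAt_left (hh'.intervalIntegrable)
      ⟨Set.univ, Filter.univ_mem, hh'.aestronglyMeasurable.restrict⟩ hcx
  have hD2 : HasDerivAt (fun y => ∫ r in Set.Ioo y 1, h r) (-h' x) x := by
    apply hD.congr_of_eventuallyEq
    filter_upwards [hmemx] with y hy
    exact FIoo_eq_interval hy.1.le hy.2.le
  have : h' x = h x := Set.indicator_of_mem (show x ∈ Set.Ioo a 1 from ⟨hax, hx.2⟩) h
  rwa [this] at hD2

lemma continuousOn_FIoo {h : ℝ → ℝ}
    (hint : ∀ x ∈ Set.Ioo (0:ℝ) 1, IntegrableOn h (Set.Ioo x 1) volume) :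
    ContinuousOn (fun y => ∫ r in Set.Ioo y 1, h r) (Set.Ioo (0:ℝ) 1) := by
  intro x hx
  apply ContinuousAt.continuousWithinAt
  have ha : x/2 ∈ Set.Ioo (0:ℝ) 1 := ⟨by linarith [hx.1], by linarith [hx.1, hx.2]⟩
  have hax : x/2 < x := by linarith [hx.1]
  set a := x/2 with ha'
  set h' := (Set.Ioo a 1).indicator h with hh'def
  have hh' : Integrable h' volume := (integrable_indicator_iff measurableSet_Ioo).2 (hint a ha)
  have hmemx : Set.Ioo a 1 ∈ nhds x := Ioo_mem_nhds hax hx.2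
  have hC : Continuous (fun u => (∫ r in a..(1:ℝ), h' r) - ∫ r in a..u, h' r) :=
    continuous_const.sub (hh'.continuous_primitive a)
  apply hC.continuousAt.congr
  filter_upwards [hmemx] with y hy
  rw [FIoo_eq_interval (h := h) (a := a) hy.1.le hy.2.le]
  have := intervalIntegral.integral_add_adjacent_intervals
    (hh'.intervalIntegrable (a := a) (b := y)) (hh'.intervalIntegrable (a := y) (b := 1))
  linarith [this]

lemma nonneg_FIoo {h : ℝ → ℝ} (hpos : ∀ r ∈ Set.Ioo (0:ℝ) 1, 0 ≤ h r) {x : ℝ} (hx : 0 ≤ x) :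
    0 ≤ ∫ r in Set.Ioo x 1, h r :=
  setIntegral_nonneg measurableSet_Ioo (fun r hr => hpos r ⟨lt_of_le_of_lt hx hr.1, hr.2⟩)

lemma antitoneOn_FIoo {h : ℝ → ℝ}
    (hint : ∀ x ∈ Set.Ioo (0:ℝ) 1, IntegrableOn h (Set.Ioo x 1) volume)
    (hpos : ∀ r ∈ Set.Ioo (0:ℝ) 1, 0 ≤ h r) :
    AntitoneOn (fun y => ∫ r in Set.Ioo y 1, h r) (Set.Ioo (0:ℝ) 1) := by
  intro x hx y hy hxy
  apply setIntegral_mono_set (hint x hx)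
  · filter_upwards [ae_restrict_mem measurableSet_Ioo] with r hr
    exact hpos r ⟨lt_trans hx.1 hr.1, hr.2⟩
  · exact HasSubset.Subset.eventuallyLE (Set.Ioo_subset_Ioo_left hxy)

lemma HIr_step (I : ℝ → ℝ)
    (hIc : ContinuousOn I (Set.Ioc (0:ℝ) 1))
    (hImono : MonotoneOn I (Set.Ioc (0:ℝ) 1))
    (hIpos : ∀ t ∈ Set.Ioc (0:ℝ) 1, 0 < I t)
    (G : ℝ → ℝ)
    (hGpos : ∀ x ∈ Set.Ioo (0:ℝ) 1, 0 ≤ G x)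
    (hGint : ∀ x ∈ Set.Ioo (0:ℝ) 1, IntegrableOn (fun r => G r / I r) (Set.Ioo x 1) volume) :
    (∀ x ∈ Set.Ioo (0:ℝ) 1, 0 ≤ HIr I G x) ∧
    ContinuousOn (HIr I G) (Set.Ioo (0:ℝ) 1) ∧
    (∀ x ∈ Set.Ioo (0:ℝ) 1, IntegrableOn (fun r => HIr I G r / I r) (Set.Ioo x 1) volume) := by
  have hposdiv : ∀ r ∈ Set.Ioo (0:ℝ) 1, 0 ≤ G r / I r := fun r hr =>
    div_nonneg (hGpos r hr) (hIpos r (Set.Ioo_subset_Ioc_self hr)).le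
  have h1 : ∀ x ∈ Set.Ioo (0:ℝ) 1, 0 ≤ HIr I G x := fun x hx =>
    nonneg_FIoo hposdiv hx.1.le
  have h2 : ContinuousOn (HIr I G) (Set.Ioo (0:ℝ) 1) := continuousOn_FIoo hGint
  have hanti : AntitoneOn (HIr I G) (Set.Ioo (0:ℝ) 1) := antitoneOn_FIoo hGint hposdiv
  refine ⟨h1, h2, ?_⟩
  intro x hx
  have hIx : 0 < I x := hIpos x (Set.Ioo_subset_Ioc_self hx)
  have hsub1 : Set.Ioo x 1 ⊆ Set.Ioo (0:ℝ) 1 := Set.Ioo_subset_Ioo_left hx.1.le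
  have hsub2 : Set.Ioo x 1 ⊆ Set.Ioc (0:ℝ) 1 := fun r hr => ⟨lt_trans hx.1 hr.1, hr.2.le⟩
  have hmeas : AEStronglyMeasurable (fun r => HIr I G r / I r)
      (volume.restrict (Set.Ioo x 1)) := by
    refine ContinuousOn.aestronglyMeasurable ?_ measurableSet_Ioo
    exact (h2.mono hsub1).div (hIc.mono hsub2) (fun r hr => (hIpos r (hsub2 hr)).ne')
  have hboundInt : IntegrableOn (fun _ : ℝ => HIr I G x / I x) (Set.Ioo x 1) volume :=
    integrableOn_const (by rw [Real.volume_Ioo]; exact ofReal_ne_top)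
  refine Integrable.mono' hboundInt hmeas ?_
  filter_upwards [ae_restrict_mem measurableSet_Ioo] with r hr
  have hrI : r ∈ Set.Ioo (0:ℝ) 1 := hsub1 hr
  rw [Real.norm_eq_abs, abs_of_nonneg (div_nonneg (h1 r hrI)
    (hIpos r (Set.Ioo_subset_Ioc_self hrI)).le)]
  exact div_le_div₀ (h1 x hx) (hanti hx hrI hr.1.le) hIx
    (hImono (Set.Ioo_subset_Ioc_self hx) (Set.Ioo_subset_Ioc_self hrI) hr.1.le)

lemma HIr_deriv (I : ℝ → ℝ)
    (hIc : ContinuousOn I (Set.Ioc (0:ℝ) 1))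
    (hIpos : ∀ t ∈ Set.Ioc (0:ℝ) 1, 0 < I t)
    (G : ℝ → ℝ)
    (hGcont : ContinuousOn G (Set.Ioo (0:ℝ) 1))
    (hGint : ∀ x ∈ Set.Ioo (0:ℝ) 1, IntegrableOn (fun r => G r / I r) (Set.Ioo x 1) volume) :
    ∀ x ∈ Set.Ioo (0:ℝ) 1, HasDerivAt (HIr I G) (-(G x / I x)) x := by
  have hcont : ContinuousOn (fun r => G r / I r) (Set.Ioo (0:ℝ) 1) :=
    hGcont.div (hIc.mono Set.Ioo_subset_Ioc_self)
      (fun r hr => (hIpos r (Set.Ioo_subset_Ioc_self hr)).ne')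
  intro x hx
  exact hasDerivAt_FIoo hGint hcont x hx

/-- the function `v(t) = H_I^m f (M(t))` is `k`-times continuously
differentiable on `(0,L)` with `v^{(k)}(t) = H_I^{m-k} f (M(t))`, for `1 ≤ k ≤ m-1`. -/
theorem derivatives_of_extremal_function (I : ℝ → ℝ)
    (hIc : ContinuousOn I (Set.Ioc (0:ℝ) 1))
    (hImono : MonotoneOn I (Set.Ioc (0:ℝ) 1))
    (hIpos : ∀ t ∈ Set.Ioc (0:ℝ) 1, 0 < I t)
    (M : ℝ → ℝ)
    (hM : ∀ t : ℝ, 0 ≤ t → ENNReal.ofReal t < Lint I →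
      M t ∈ Set.Ioc (0:ℝ) 1 ∧ ∫ r in (M t)..1, 1 / I r = t)
    (m : ℕ) (hm : 2 ≤ m)
    (f : ℝ → ℝ) (hf : Measurable f) (hfpos : ∀ t ∈ Set.Ioo (0:ℝ) 1, 0 ≤ f t)
    (hfint : ∀ t ∈ Set.Ioo (0:ℝ) 1,
      IntegrableOn (fun r => f r / I r) (Set.Ioo t 1) volume) :
    ∀ k : ℕ, 1 ≤ k → k ≤ m - 1 →
      ContDiffOn ℝ (k : ℕ∞) (fun t => (HIr I)^[m] f (M t))
        {t : ℝ | 0 < t ∧ ENNReal.ofReal t < Lint I} ∧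
      ∀ t : ℝ, 0 < t → ENNReal.ofReal t < Lint I →
        iteratedDeriv k (fun t => (HIr I)^[m] f (M t)) t
          = (HIr I)^[m - k] f (M t) := by
  set S := {t : ℝ | 0 < t ∧ ENNReal.ofReal t < Lint I} with hSdef
  have hSopen : IsOpen S := by
    have h1 : IsOpen {t : ℝ | 0 < t} := isOpen_lt continuous_const continuous_id
    have h2 : IsOpen {t : ℝ | ENNReal.ofReal t < Lint I} :=
      isOpen_Iio.preimage ENNReal.continuous_ofReal
    exact h1.inter h2
  -- ladder of properties for the iterates
  have ladder : ∀ j : ℕ,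
      (∀ x ∈ Set.Ioo (0:ℝ) 1, 0 ≤ (HIr I)^[j+1] f x) ∧
      ContinuousOn ((HIr I)^[j+1] f) (Set.Ioo (0:ℝ) 1) ∧
      (∀ x ∈ Set.Ioo (0:ℝ) 1,
        IntegrableOn (fun r => (HIr I)^[j+1] f r / I r) (Set.Ioo x 1) volume) := by
    intro j
    induction j with
    | zero => simpa using HIr_step I hIc hImono hIpos f hfpos hfint
    | succ n ih =>
      have h := HIr_step I hIc hImono hIpos ((HIr I)^[n+1] f) ih.1 ih.2.2
      simpa [Function.iterate_succ_apply'] using h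
  have gderiv : ∀ j : ℕ, ∀ x ∈ Set.Ioo (0:ℝ) 1,
      HasDerivAt ((HIr I)^[j+2] f) (-((HIr I)^[j+1] f x / I x)) x := by
    intro j x hx
    have h := HIr_deriv I hIc hIpos ((HIr I)^[j+1] f) (ladder j).2.1 (ladder j).2.2 x hx
    rw [show (HIr I)^[j+2] f = HIr I ((HIr I)^[j+1] f) from Function.iterate_succ_apply' _ _ _]
    exact h
  -- basic facts about I
  have hI1 : 0 < I 1 := hIpos 1 ⟨one_pos, le_refl 1⟩
  have hIoc_int : ∀ x ∈ Set.Ioc (0:ℝ) 1,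
      IntegrableOn (fun r => 1 / I r) (Set.Icc x 1) volume := by
    intro x hx
    have hsub : Set.Icc x 1 ⊆ Set.Ioc (0:ℝ) 1 := fun r hr => ⟨lt_of_lt_of_le hx.1 hr.1, hr.2⟩
    exact (continuousOn_const.div (hIc.mono hsub)
      (fun r hr => (hIpos r (hsub hr)).ne')).integrableOn_Icc
  -- Lipschitz-type estimate for M
  have hMkey : ∀ s t : ℝ, 0 ≤ s → ENNReal.ofReal s < Lint I →
      0 ≤ t → ENNReal.ofReal t < Lint I → M t ≤ M s →
      M s - M t ≤ I 1 * (t - s) ∧ s ≤ t := by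
    intro s t hs hsL ht htL hle
    obtain ⟨hMs, hJs⟩ := hM s hs hsL
    obtain ⟨hMt, hJt⟩ := hM t ht htL
    have hint1 : IntervalIntegrable (fun r => 1 / I r) volume (M t) (M s) := by
      rw [intervalIntegrable_iff_integrableOn_Ioc_of_le hle]
      exact (hIoc_int _ hMt).mono_set (fun r hr => ⟨hr.1.le, le_trans hr.2 hMs.2⟩)
    have hint2 : IntervalIntegrable (fun r => 1 / I r) volume (M s) 1 := by
      rw [intervalIntegrable_iff_integrableOn_Ioc_of_le hMs.2]
      exact (hIoc_int _ hMs).mono_set (fun r hr => ⟨hr.1.le, hr.2⟩)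
    have hadd := intervalIntegral.integral_add_adjacent_intervals hint1 hint2
    rw [hJs, hJt] at hadd
    have hts : (∫ r in (M t)..(M s), 1 / I r) = t - s := by linarith
    have hvol : volume (Set.Ioc (M t) (M s)) ≠ ⊤ := by
      rw [Real.volume_Ioc]; exact ofReal_ne_top
    have hlb : (1 / I 1) * (volume (Set.Ioc (M t) (M s))).toReal
        ≤ ∫ r in Set.Ioc (M t) (M s), 1 / I r := by
      refine setIntegral_ge_of_const_le_real measurableSet_Ioc hvol ?_ ?_
      · intro r hr
        have hrI : r ∈ Set.Ioc (0:ℝ) 1 := ⟨lt_trans hMt.1 hr.1, le_trans hr.2 hMs.2⟩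
        exact one_div_le_one_div_of_le (hIpos r hrI) (hImono hrI ⟨one_pos, le_refl 1⟩ hrI.2)
      · exact (hIoc_int _ hMt).mono_set (fun r hr => ⟨hr.1.le, le_trans hr.2 hMs.2⟩)
    rw [Real.volume_Ioc, toReal_ofReal (sub_nonneg.2 hle)] at hlb
    rw [← intervalIntegral.integral_of_le hle, hts] at hlb
    -- hlb : (1 / I 1) * (M s - M t) ≤ t - s
    have h3 : M s - M t = I 1 * ((1 / I 1) * (M s - M t)) := by field_simp
    have h4 : 0 ≤ (1 / I 1) * (M s - M t) :=
      mul_nonneg (by positivity) (sub_nonneg.2 hle)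
    constructor
    · rw [h3]; exact mul_le_mul_of_nonneg_left hlb hI1.le
    · nlinarith
  have hMlip : ∀ s t : ℝ, 0 ≤ s → ENNReal.ofReal s < Lint I →
      0 ≤ t → ENNReal.ofReal t < Lint I → |M s - M t| ≤ I 1 * |s - t| := by
    intro s t hs hsL ht htL
    rcases le_total (M t) (M s) with h | h
    · obtain ⟨h1, h2⟩ := hMkey s t hs hsL ht htL h
      rw [abs_of_nonneg (sub_nonneg.2 h), abs_of_nonpos (sub_nonpos.2 h2)]
      linarith
    · obtain ⟨h1, h2⟩ := hMkey t s ht htL hs hsL h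
      rw [abs_of_nonpos (sub_nonpos.2 h), abs_of_nonneg (sub_nonneg.2 h2)]
      linarith
  have hMcont : ∀ t ∈ S, ContinuousAt M t := by
    intro t ht
    obtain ⟨r, hr, hball⟩ := Metric.isOpen_iff.1 hSopen t ht
    refine continuousAt_of_locally_lipschitz hr (I 1) (fun y hy => ?_)
    have hyS : y ∈ S := hball hy
    rw [Real.dist_eq, Real.dist_eq]
    exact hMlip y t hyS.1.le hyS.2 ht.1.le ht.2
  have hMmem : ∀ t ∈ S, M t ∈ Set.Ioo (0:ℝ) 1 := by
    intro t ht
    obtain ⟨h1, h2⟩ := hM t ht.1.le ht.2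
    refine ⟨h1.1, lt_of_le_of_ne h1.2 ?_⟩
    intro heq
    rw [heq] at h2
    simp at h2
    exact absurd h2.symm (ne_of_gt ht.1)
  -- derivative of J(x) = ∫ x..1 1/I
  have hJd : ∀ c ∈ Set.Ioo (0:ℝ) 1,
      HasDerivAt (fun x => ∫ r in x..(1:ℝ), 1 / I r) (-(1 / I c)) c := by
    intro c hc
    have h1 : HasDerivAt (fun y => ∫ r in Set.Ioo y 1, 1 / I r) (-(1 / I c)) c :=
      hasDerivAt_FIoo
        (fun x hx => ((hIoc_int x (Set.Ioo_subset_Ioc_self hx)).mono_set Set.Ioo_subset_Icc_self))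
        (continuousOn_const.div (hIc.mono Set.Ioo_subset_Ioc_self)
          (fun r hr => (hIpos r (Set.Ioo_subset_Ioc_self hr)).ne')) c hc
    apply h1.congr_of_eventuallyEq
    filter_upwards [Ioo_mem_nhds hc.1 hc.2] with y hy
    rw [intervalIntegral.integral_of_le hy.2.le, integral_Ioc_eq_integral_Ioo]
  have hMd : ∀ t ∈ S, HasDerivAt M (-I (M t)) t := by
    intro t ht
    have hc : M t ∈ Set.Ioo (0:ℝ) 1 := hMmem t ht
    have hICpos : 0 < I (M t) := hIpos _ (Set.Ioo_subset_Ioc_self hc)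
    have hfg : ∀ᶠ y in nhds t, (fun x => ∫ r in x..(1:ℝ), 1 / I r) (M y) = y := by
      filter_upwards [hSopen.mem_nhds ht] with y hy
      exact (hM y hy.1.le hy.2).2
    have hD := HasDerivAt.of_local_left_inverse (hMcont t ht) (hJd (M t) hc)
      (neg_ne_zero.2 (one_div_ne_zero hICpos.ne')) hfg
    have : (-(1 / I (M t)))⁻¹ = -I (M t) := by
      rw [one_div, inv_neg, inv_inv]
    rwa [this] at hD
  -- chain rule
  have hchain : ∀ j : ℕ, ∀ t ∈ S,
      HasDerivAt (fun s => (HIr I)^[j+2] f (M s)) ((HIr I)^[j+1] f (M t)) t := by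
    intro j t ht
    have hc := hMmem t ht
    have hICpos : 0 < I (M t) := hIpos _ (Set.Ioo_subset_Ioc_self hc)
    have hg := gderiv j (M t) hc
    have hcomp := HasDerivAt.comp t hg (hMd t ht)
    have heq : -((HIr I)^[j+1] f (M t) / I (M t)) * -I (M t) = (HIr I)^[j+1] f (M t) := by
      field_simp
    rw [heq] at hcomp
    exact hcomp
  have hvcont : ∀ j : ℕ, ContinuousOn (fun s => (HIr I)^[j+1] f (M s)) S := by
    intro j t ht
    have hc := hMmem t ht
    exact (((ladder j).2.1.continuousAt (Ioo_mem_nhds hc.1 hc.2)).comp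
      (hMcont t ht)).continuousWithinAt
  -- smoothness
  have hR : ∀ k : ℕ, ∀ j : ℕ, k + 1 ≤ j →
      ContDiffOn ℝ (k : ℕ∞) (fun s => (HIr I)^[j] f (M s)) S := by
    intro k
    induction k with
    | zero =>
      intro j hj
      obtain ⟨i, rfl⟩ : ∃ i, j = i + 1 := ⟨j - 1, by omega⟩
      simpa [contDiffOn_zero] using hvcont i
    | succ n ih =>
      intro j hj
      obtain ⟨i, rfl⟩ : ∃ i, j = i + 2 := ⟨j - 2, by omega⟩
      have hcast : (((n+1 : ℕ) : ℕ∞) : WithTop ℕ∞) = ((n : ℕ∞) : WithTop ℕ∞) + 1 := by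
        push_cast
        rfl
      rw [hcast, contDiffOn_succ_iff_deriv_of_isOpen hSopen]
      refine ⟨fun t ht => (hchain i t ht).differentiableAt.differentiableWithinAt, ?_, ?_⟩
      · intro htop
        exact absurd htop (by simp)
      · refine (ih (i+1) (by omega)).congr ?_
        intro t ht
        exact (hchain i t ht).deriv
  -- iterated derivative identity
  have hD : ∀ k : ℕ, k ≤ m - 1 → ∀ t ∈ S,
      deriv^[k] (fun s => (HIr I)^[m] f (M s)) t = (HIr I)^[m-k] f (M t) := by
    intro k
    induction k with
    | zero => intro _ t ht; simp
    | succ n ih =>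
      intro hn t ht
      rw [Function.iterate_succ_apply']
      have heq : deriv^[n] (fun s => (HIr I)^[m] f (M s))
          =ᶠ[nhds t] (fun s => (HIr I)^[m-n] f (M s)) := by
        filter_upwards [hSopen.mem_nhds ht] with s hs
        exact ih (by omega) s hs
      rw [heq.deriv_eq]
      obtain ⟨i, hi⟩ : ∃ i, m - n = i + 2 := ⟨m - n - 2, by omega⟩
      rw [hi, show m - (n+1) = i + 1 from by omega]
      exact (hchain i t ht).deriv
  intro k hk1 hk2
  constructor
  · exact hR k m (by omega)
  · intro t ht1 ht2
    rw [iteratedDeriv_eq_iterate]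
    exact hD k hk2 t ⟨ht1, ht2⟩
end

section
/- Let m ∈ ℕ, m ≥ 2, let I be a positive nondecreasing function on (0,1), and let N be a rearrangement-invariant function norm on (0,1). Suppose there exists a constant C > 0 such that (∫_0^t ds/I(s))^m ≤ C · N(χ_{(0,t)}) for every t ∈ (0,1). Then ∫_0^1 ds/I(s) < ∞ and there exists a constant C' > 0 such that sup_{t∈(0,1)} g**(t) (∫_0^t ds/I(s))^m ≤ C' · N(g) for every measurable function g on (0,1), where g** denotes the maximal function of the decreasing rearrangement of g. -/
open MeasureTheory ENNReal NNReal

/-- The decreasing rearrangement on `(0,1)` of a `[0,∞]`-valued function. -/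
noncomputable def decRearr (g : ℝ → ℝ≥0∞) (s : ℝ) : ℝ≥0∞ :=
  sInf {lam : ℝ≥0∞ | volume {t ∈ Set.Ioo (0:ℝ) 1 | lam < g t} ≤ ENNReal.ofReal s}

section helpers
open Set

lemma decRearr_antitone (g : ℝ → ℝ≥0∞) : Antitone (decRearr g) := by
  intro a b hab
  exact sInf_le_sInf (fun lam hl => le_trans hl (ENNReal.ofReal_le_ofReal hab))

lemma decRearr_measurable (g : ℝ → ℝ≥0∞) : Measurable (decRearr g) :=
  (decRearr_antitone g).measurable

-- right continuity of the distribution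
lemma dist_iUnion (g : ℝ → ℝ≥0∞) (lam : ℝ≥0∞) (hlam : lam ≠ ⊤) :
    {x ∈ Ioo (0:ℝ) 1 | lam < g x}
      = ⋃ n : ℕ, {x ∈ Ioo (0:ℝ) 1 | lam + (↑(n+1) : ℝ≥0∞)⁻¹ < g x} := by
  ext x
  simp only [mem_iUnion, mem_setOf_eq, mem_sep_iff]
  constructor
  · rintro ⟨hx, hlt⟩
    rcases eq_or_ne (g x) ⊤ with hgx | hgx
    · exact ⟨0, hx, by rw [hgx]; exact lt_of_lt_of_le (ENNReal.add_lt_top.2 ⟨hlam.lt_top, by norm_num⟩) le_top⟩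
    · have hpos : g x - lam ≠ 0 := by
        simpa [tsub_eq_zero_iff_le] using not_le.2 hlt
      obtain ⟨n, hn⟩ := ENNReal.exists_inv_nat_lt hpos
      rcases n with _ | n
      · simp at hn
      · refine ⟨n, hx, ?_⟩
        calc lam + (↑(n+1) : ℝ≥0∞)⁻¹ < lam + (g x - lam) :=
              ENNReal.add_lt_add_left hlam (by exact_mod_cast hn)
          _ = g x := add_tsub_cancel_of_le hlt.le
  · rintro ⟨n, hx, hlt⟩
    exact ⟨hx, lt_of_le_of_lt (le_add_right le_rfl) hlt⟩

lemma dist_top (g : ℝ → ℝ≥0∞) : volume {x ∈ Ioo (0:ℝ) 1 | (⊤:ℝ≥0∞) < g x} = 0 := by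
  convert measure_empty (μ := volume)
  ext x; simp

-- key: lam < decRearr g s ↔ ofReal s < dist lam
lemma decRearr_lt_iff (g : ℝ → ℝ≥0∞) (hg : Measurable g) (lam : ℝ≥0∞) (s : ℝ) :
    lam < decRearr g s ↔ ENNReal.ofReal s < volume {x ∈ Ioo (0:ℝ) 1 | lam < g x} := by
  constructor
  · intro h
    by_contra hc
    push_neg at hc
    have hle : decRearr g s ≤ lam := sInf_le hc
    exact absurd hle (not_le.2 h)
  · intro h
    rcases eq_or_ne lam ⊤ with rfl | hlam
    · rw [dist_top] at h; simp at h
    · rw [dist_iUnion g lam hlam] at h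
      have := lt_of_lt_of_le h (measure_iUnion_le _)
      -- get one n
      have h2 : ∃ n : ℕ, ENNReal.ofReal s < volume {x ∈ Ioo (0:ℝ) 1 | lam + (↑(n+1) : ℝ≥0∞)⁻¹ < g x} := by
        by_contra hc
        push_neg at hc
        have : volume (⋃ n : ℕ, {x ∈ Ioo (0:ℝ) 1 | lam + (↑(n+1) : ℝ≥0∞)⁻¹ < g x})
            ≤ ENNReal.ofReal s := by
          rw [Directed.measure_iUnion]
          · exact iSup_le hc
          · intro a b
            have key : ∀ c : ℕ, c ≤ max a b → {x ∈ Ioo (0:ℝ) 1 | lam + (↑(c+1) : ℝ≥0∞)⁻¹ < g x}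
                ⊆ {x ∈ Ioo (0:ℝ) 1 | lam + (↑(max a b + 1) : ℝ≥0∞)⁻¹ < g x} := by
              intro c hc x hx
              refine ⟨hx.1, lt_of_le_of_lt (add_le_add le_rfl ?_) hx.2⟩
              exact ENNReal.inv_le_inv.2 (by exact_mod_cast Nat.succ_le_succ hc)
            exact ⟨max a b, key a (le_max_left a b), key b (le_max_right a b)⟩
        exact absurd h (not_lt.2 this)
      obtain ⟨n, hn⟩ := h2
      have hmem : ∀ mu ∈ {lam' : ℝ≥0∞ | volume {t ∈ Set.Ioo (0:ℝ) 1 | lam' < g t} ≤ ENNReal.ofReal s},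
          lam + (↑(n+1) : ℝ≥0∞)⁻¹ ≤ mu := by
        intro mu hmu
        by_contra hc
        push_neg at hc
        have : volume {x ∈ Ioo (0:ℝ) 1 | lam + (↑(n+1) : ℝ≥0∞)⁻¹ < g x}
            ≤ volume {t ∈ Set.Ioo (0:ℝ) 1 | mu < g t} :=
          measure_mono (fun x hx => ⟨hx.1, lt_of_le_of_lt hc.le hx.2⟩)
        exact absurd (le_trans this hmu) (not_le.2 hn)
      have hfin : lam + (↑(n+1) : ℝ≥0∞)⁻¹ ≤ decRearr g s := le_sInf hmem
      refine lt_of_lt_of_le ?_ hfin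
      exact ENNReal.lt_add_right hlam (ENNReal.inv_ne_zero.2 (ENNReal.natCast_ne_top _))

lemma dist_le_one (g : ℝ → ℝ≥0∞) (lam : ℝ≥0∞) :
    volume {x ∈ Ioo (0:ℝ) 1 | lam < g x} ≤ 1 := by
  calc volume {x ∈ Ioo (0:ℝ) 1 | lam < g x} ≤ volume (Ioo (0:ℝ) 1) :=
        measure_mono (fun x hx => hx.1)
    _ = 1 := by simp [Real.volume_Ioo]

lemma decRearr_equimeasurable (g : ℝ → ℝ≥0∞) (hg : Measurable g) (lam : ℝ≥0∞) :
    volume {s ∈ Ioo (0:ℝ) 1 | lam < decRearr g s} = volume {x ∈ Ioo (0:ℝ) 1 | lam < g x} := by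
  set D := volume {x ∈ Ioo (0:ℝ) 1 | lam < g x} with hD
  have hD1 : D ≤ 1 := dist_le_one g lam
  have hDtop : D ≠ ⊤ := (lt_of_le_of_lt hD1 one_lt_top).ne
  have hset : {s ∈ Ioo (0:ℝ) 1 | lam < decRearr g s} = Ioo (0:ℝ) D.toReal := by
    ext s
    simp only [mem_sep_iff, mem_Ioo]
    constructor
    · rintro ⟨⟨hs0, hs1⟩, hlt⟩
      rw [decRearr_lt_iff g hg] at hlt
      refine ⟨hs0, ?_⟩
      rw [← hD] at hlt
      exact (ENNReal.ofReal_lt_iff_lt_toReal hs0.le hDtop).1 hlt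
    · rintro ⟨hs0, hsD⟩
      have hDtoReal_le : D.toReal ≤ 1 := by
        calc D.toReal ≤ (1:ℝ≥0∞).toReal := ENNReal.toReal_mono one_ne_top hD1
          _ = 1 := by simp
      refine ⟨⟨hs0, lt_of_lt_of_le hsD hDtoReal_le⟩, ?_⟩
      rw [decRearr_lt_iff g hg, ← hD]
      exact (ENNReal.ofReal_lt_iff_lt_toReal hs0.le hDtop).2 hsD
  rw [hset, Real.volume_Ioo]
  simp only [sub_zero]
  exact ENNReal.ofReal_toReal hDtop

noncomputable def shiftF (f : ℝ → ℝ≥0∞) (t s : ℝ) : ℝ → ℝ≥0∞ :=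
  fun x => if x ∈ Set.Ioo 0 (t - s) then f (x + s)
    else if x ∈ Set.Ico (t - s) t then f (x + (s - t)) else f x

lemma shiftF_measurable (f : ℝ → ℝ≥0∞) (hf : Measurable f) (t s : ℝ) :
    Measurable (shiftF f t s) := by
  unfold shiftF
  refine Measurable.ite measurableSet_Ioo (hf.comp (measurable_add_const s)) ?_
  exact Measurable.ite measurableSet_Ico (hf.comp (measurable_add_const (s - t))) hf

-- measure of (interval ∩ S) ignores endpoints
lemma vol_inter_endpoint (a b : ℝ) (S : Set ℝ) :
    volume (Ico a b ∩ S) = volume (Ioo a b ∩ S) := by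
  apply le_antisymm
  · calc volume (Ico a b ∩ S) ≤ volume ((Ioo a b ∩ S) ∪ {a}) := by
          apply measure_mono
          rintro x ⟨⟨hxa, hxb⟩, hxS⟩
          rcases eq_or_lt_of_le hxa with rfl | h
          · exact Or.inr rfl
          · exact Or.inl ⟨⟨h, hxb⟩, hxS⟩
      _ ≤ volume (Ioo a b ∩ S) + volume ({a} : Set ℝ) := measure_union_le _ _
      _ = volume (Ioo a b ∩ S) := by simp
  · exact measure_mono (inter_subset_inter_left S Ioo_subset_Ico_self)

lemma vol_glue (a b c : ℝ) (hab : a ≤ b) (hbc : b ≤ c) (S : Set ℝ) (hSm : MeasurableSet S) :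
    volume (Ioo a b ∩ S) + volume (Ioo b c ∩ S) = volume (Ioo a c ∩ S) := by
  rcases eq_or_lt_of_le hab with rfl | hab'
  · simp
  · rw [← vol_inter_endpoint b c S, ← measure_union ?_ (measurableSet_Ico.inter hSm),
      ← union_inter_distrib_right, Ioo_union_Ico_eq_Ioo hab' hbc]
    rw [disjoint_left]
    rintro x ⟨⟨_, hb⟩, _⟩ ⟨⟨hc, _⟩, _⟩
    linarith

lemma shiftF_equi (f : ℝ → ℝ≥0∞) (hf : Measurable f) (t s : ℝ)
    (h0 : 0 < t) (ht : t < 1) (hs : 0 ≤ s) (hst : s < t) (lam : ℝ≥0∞) :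
    volume {x ∈ Ioo (0:ℝ) 1 | lam < shiftF f t s x}
      = volume {x ∈ Ioo (0:ℝ) 1 | lam < f x} := by
  set S := {y : ℝ | lam < f y} with hS
  have hSm : MeasurableSet S := measurableSet_lt measurable_const hf
  have hdecomp : {x ∈ Ioo (0:ℝ) 1 | lam < shiftF f t s x}
      = ((fun x => x + s) ⁻¹' (Ioo s t ∩ S)) ∪ ((fun x => x + (s - t)) ⁻¹' (Ico 0 s ∩ S))
        ∪ (Ico t 1 ∩ S) := by
    ext x
    simp only [mem_sep_iff, mem_union, mem_preimage, mem_inter_iff, mem_Ioo, mem_Ico]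
    constructor
    · rintro ⟨⟨hx0, hx1⟩, hlt⟩
      unfold shiftF at hlt
      by_cases h1 : x ∈ Ioo 0 (t - s)
      · rw [if_pos h1] at hlt
        exact Or.inl (Or.inl ⟨⟨by linarith [h1.1], by linarith [h1.2]⟩, hlt⟩)
      · by_cases h2 : x ∈ Ico (t - s) t
        · rw [if_neg h1, if_pos h2] at hlt
          exact Or.inl (Or.inr ⟨⟨by linarith [h2.1], by linarith [h2.2]⟩, hlt⟩)
        · rw [if_neg h1, if_neg h2] at hlt
          simp only [mem_Ioo, mem_Ico, not_and, not_lt] at h1 h2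
          have hxt : t ≤ x := by
            by_contra hc
            push_neg at hc
            rcases lt_or_ge x (t - s) with h | h
            · linarith [h1 hx0]
            · linarith [h2 h]
          exact Or.inr ⟨⟨hxt, hx1⟩, hlt⟩
    · rintro ((⟨⟨ha, hb⟩, hmem⟩ | ⟨⟨ha, hb⟩, hmem⟩) | ⟨⟨ha, hb⟩, hmem⟩)
      · have hx : x ∈ Ioo 0 (t - s) := ⟨by linarith, by linarith⟩
        refine ⟨⟨hx.1, by linarith⟩, ?_⟩
        unfold shiftF
        rwa [if_pos hx]
      · have hx1 : x ∉ Ioo 0 (t - s) := by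
          simp only [mem_Ioo, not_and, not_lt]
          intro _; linarith
        have hx2 : x ∈ Ico (t - s) t := ⟨by linarith, by linarith⟩
        refine ⟨⟨by linarith [hx2.1], by linarith [hx2.2]⟩, ?_⟩
        unfold shiftF
        rwa [if_neg hx1, if_pos hx2]
      · have hx1 : x ∉ Ioo 0 (t - s) := by
          simp only [mem_Ioo, not_and, not_lt]
          intro _; linarith
        have hx2 : x ∉ Ico (t - s) t := by
          simp only [mem_Ico, not_and, not_lt]
          intro _; linarith
        refine ⟨⟨by linarith, hb⟩, ?_⟩
        unfold shiftF
        rwa [if_neg hx1, if_neg hx2]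
  rw [hdecomp]
  have hm1 : MeasurableSet ((fun x : ℝ => x + s) ⁻¹' (Ioo s t ∩ S)) :=
    (measurableSet_Ioo.inter hSm).preimage (measurable_add_const s)
  have hm2 : MeasurableSet ((fun x : ℝ => x + (s - t)) ⁻¹' (Ico 0 s ∩ S)) :=
    (measurableSet_Ico.inter hSm).preimage (measurable_add_const (s - t))
  have hm3 : MeasurableSet (Ico t 1 ∩ S) := measurableSet_Ico.inter hSm
  have hd12 : Disjoint ((fun x : ℝ => x + s) ⁻¹' (Ioo s t ∩ S))
      ((fun x : ℝ => x + (s - t)) ⁻¹' (Ico 0 s ∩ S)) := by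
    rw [disjoint_left]
    intro x hx hx'
    simp only [mem_preimage, mem_inter_iff, mem_Ioo, mem_Ico, mem_setOf_eq] at hx hx'
    obtain ⟨⟨_, hb⟩, _⟩ := hx
    obtain ⟨⟨hc, _⟩, _⟩ := hx'
    linarith
  have hd123 : Disjoint (((fun x : ℝ => x + s) ⁻¹' (Ioo s t ∩ S))
      ∪ ((fun x : ℝ => x + (s - t)) ⁻¹' (Ico 0 s ∩ S))) (Ico t 1 ∩ S) := by
    rw [disjoint_left]
    intro x hx hx'
    simp only [mem_union, mem_preimage, mem_inter_iff, mem_Ioo, mem_Ico, mem_setOf_eq] at hx hx'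
    obtain ⟨⟨hc, _⟩, _⟩ := hx'
    rcases hx with ⟨⟨_, hb⟩, _⟩ | ⟨⟨_, hb⟩, _⟩ <;> linarith
  rw [measure_union hd123 hm3, measure_union hd12 hm2,
    measure_preimage_add_right volume s _, measure_preimage_add_right volume (s - t) _]
  rw [vol_inter_endpoint 0 s S, vol_inter_endpoint t 1 S]
  have hsep : {x ∈ Ioo (0:ℝ) 1 | lam < f x} = Ioo (0:ℝ) 1 ∩ S := by
    ext x; simp only [mem_sep_iff, mem_inter_iff, hS, mem_setOf_eq]
  rw [hsep, ← vol_glue 0 t 1 h0.le ht.le S hSm, ← vol_glue 0 s t hs hst.le S hSm]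
  ring

lemma riemann_lb (f : ℝ → ℝ≥0∞) (hfA : Antitone f) (a δ : ℝ) (hδ : 0 < δ) (M : ℕ) :
    ∫⁻ y in Ioc a (a + M * δ), f y
      ≤ (∑ j ∈ Finset.range M, f (a + j * δ)) * ENNReal.ofReal δ := by
  induction M with
  | zero => simp
  | succ M ih =>
    have h1 : a ≤ a + M * δ := by nlinarith [Nat.cast_nonneg (α := ℝ) M]
    have h2 : a + (M:ℝ) * δ ≤ a + (M+1 : ℕ) * δ := by push_cast; nlinarith
    rw [← Ioc_union_Ioc_eq_Ioc h1 h2]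
    refine le_trans (lintegral_union_le _ _ _) ?_
    rw [Finset.sum_range_succ, add_mul]
    refine add_le_add ih ?_
    calc ∫⁻ y in Ioc (a + M * δ) (a + (M+1:ℕ) * δ), f y
        ≤ ∫⁻ _ in Ioc (a + M * δ) (a + (M+1:ℕ) * δ), f (a + M * δ) := by
          refine setLIntegral_mono measurable_const ?_
          intro y hy
          exact hfA hy.1.le
      _ = f (a + M * δ) * ENNReal.ofReal δ := by
          rw [setLIntegral_const, Real.volume_Ioc]
          congr 1
          push_cast
          ring_nf

lemma shift_sum_lb (f : ℝ → ℝ≥0∞) (hfA : Antitone f) (t : ℝ) (ht : 0 < t) (n : ℕ)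
    (x : ℝ) (hx : x ∈ Ioo 0 t) :
    ∫⁻ y in Ioc (t/(n+1)) t, f y
      ≤ ENNReal.ofReal (t/(n+1)) * ∑ k ∈ Finset.range (n+1), shiftF f t (k * (t/(n+1))) x := by
  obtain ⟨hx0, hxt⟩ := hx
  set δ := t/(n+1) with hδdef
  have hδ : 0 < δ := by positivity
  have hnt : ((n:ℝ)+1) * δ = t := by
    rw [hδdef]; field_simp
  -- the property defining K
  have hex : ∃ k : ℕ, t ≤ x + k * δ := ⟨n+1, by push_cast; nlinarith⟩
  classical
  set K := Nat.find hex with hKdef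
  have hKge : t ≤ x + K * δ := Nat.find_spec hex
  have hKlt : ∀ k, k < K → x + k * δ < t := by
    intro k hk
    have := Nat.find_min hex hk
    linarith [not_le.1 this]
  have hK1 : 1 ≤ K := by
    rcases Nat.eq_zero_or_pos K with h | h
    · exfalso; rw [h] at hKge; push_cast at hKge; linarith
    · exact h
  have hKn : K ≤ n + 1 := by
    by_contra hc
    push_neg at hc
    have := hKlt (n+1) hc
    push_cast at this
    nlinarith
  -- value of the shifts
  have hval : ∀ k, k ≤ n → shiftF f t (k * δ) x
      = if x + k * δ < t then f (x + k * δ) else f (x + k * δ - t) := by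
    intro k hk
    have hs0 : (0:ℝ) ≤ k * δ := by positivity
    have hst : (k:ℝ) * δ < t := by
      have : (k:ℝ) ≤ n := by exact_mod_cast hk
      nlinarith
    unfold shiftF
    by_cases hxk : x + k * δ < t
    · rw [if_pos (show x ∈ Ioo 0 (t - k * δ) from ⟨hx0, by linarith⟩), if_pos hxk]
    · rw [if_neg (by simp only [mem_Ioo, not_and, not_lt]; intro _; linarith [not_lt.1 hxk]),
        if_pos (show x ∈ Ico (t - k * δ) t from ⟨by linarith [not_lt.1 hxk], hxt⟩), if_neg hxk]
      congr 1
      ring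
  -- split the sum
  have hsplit : ∑ k ∈ Finset.range (n+1), shiftF f t (k * δ) x
      = (∑ k ∈ Finset.range K, f (x + k * δ))
        + ∑ j ∈ Finset.range (n+1-K), f ((x + K * δ - t) + j * δ) := by
    have hIco := Finset.sum_Ico_consecutive (fun k : ℕ => shiftF f t (k * δ) x)
      (Nat.zero_le K) hKn
    calc ∑ k ∈ Finset.range (n+1), shiftF f t (k * δ) x
        = ∑ k ∈ Finset.Ico 0 (n+1), shiftF f t (k * δ) x := by rw [Finset.range_eq_Ico]
      _ = (∑ k ∈ Finset.Ico 0 K, shiftF f t (k * δ) x)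
          + ∑ k ∈ Finset.Ico K (n+1), shiftF f t (k * δ) x := hIco.symm
      _ = (∑ k ∈ Finset.range K, f (x + k * δ))
          + ∑ j ∈ Finset.range (n+1-K), f ((x + K * δ - t) + j * δ) := by
          congr 1
          · rw [← Finset.range_eq_Ico]
            apply Finset.sum_congr rfl
            intro k hk
            have hk' : k < K := Finset.mem_range.1 hk
            rw [hval k (by omega), if_pos (hKlt k hk')]
          · rw [Finset.sum_Ico_eq_sum_range]
            apply Finset.sum_congr rfl
            intro j hj
            have hj' : j < n + 1 - K := Finset.mem_range.1 hj
            have hge : t ≤ x + ((K + j : ℕ) : ℝ) * δ := by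
              push_cast
              nlinarith [Nat.cast_nonneg (α := ℝ) j, hKge]
            rw [hval (K + j) (by omega), if_neg (not_lt.2 hge)]
            congr 1
            push_cast
            ring
  -- two Riemann bounds
  have hr1 : ∫⁻ y in Ioc x (x + K * δ), f y
      ≤ (∑ k ∈ Finset.range K, f (x + k * δ)) * ENNReal.ofReal δ := riemann_lb f hfA x δ hδ K
  have hr2 : ∫⁻ y in Ioc (x + K * δ - t) x, f y
      ≤ (∑ j ∈ Finset.range (n+1-K), f ((x + K * δ - t) + j * δ)) * ENNReal.ofReal δ := by
    have hend : (x + K * δ - t) + (n+1-K : ℕ) * δ = x := by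
      rw [Nat.cast_sub hKn]
      push_cast
      nlinarith [hnt]
    have := riemann_lb f hfA (x + K * δ - t) δ hδ (n+1-K)
    rwa [hend] at this
  -- set inclusions
  have hr0δ : x + K * δ - t < δ := by
    have := hKlt (K-1) (by omega)
    have hc : ((K-1:ℕ):ℝ) = (K:ℝ) - 1 := by
      rw [Nat.cast_sub hK1]; push_cast; ring
    rw [hc] at this
    nlinarith
  calc ∫⁻ y in Ioc δ t, f y ≤ ∫⁻ y in Ioc δ x ∪ Ioc x t, f y := by
        apply lintegral_mono_set
        intro y hy
        rcases le_or_gt y x with h | h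
        · exact Or.inl ⟨hy.1, h⟩
        · exact Or.inr ⟨h, hy.2⟩
    _ ≤ (∫⁻ y in Ioc δ x, f y) + ∫⁻ y in Ioc x t, f y := lintegral_union_le _ _ _
    _ ≤ (∫⁻ y in Ioc (x + K * δ - t) x, f y) + ∫⁻ y in Ioc x (x + K * δ), f y := by
        refine add_le_add (lintegral_mono_set ?_) (lintegral_mono_set ?_)
        · exact Ioc_subset_Ioc_left hr0δ.le
        · exact Ioc_subset_Ioc_right hKge
    _ ≤ (∑ j ∈ Finset.range (n+1-K), f ((x + K * δ - t) + j * δ)) * ENNReal.ofReal δ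
        + (∑ k ∈ Finset.range K, f (x + k * δ)) * ENNReal.ofReal δ := add_le_add hr2 hr1
    _ = ENNReal.ofReal δ * ∑ k ∈ Finset.range (n+1), shiftF f t (k * δ) x := by
        rw [hsplit]; ring

lemma lintegral_iSup_sets (f : ℝ → ℝ≥0∞) (hf : Measurable f) (s : ℕ → Set ℝ) (S : Set ℝ)
    (hm : ∀ n, MeasurableSet (s n)) (hmono : Monotone s) (hU : (⋃ n, s n) = S) :
    ⨆ n, ∫⁻ y in s n, f y = ∫⁻ y in S, f y := by
  have hSm : MeasurableSet S := hU ▸ MeasurableSet.iUnion hm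
  have hpt : ∀ y, (⨆ n, (s n).indicator f y) = S.indicator f y := by
    intro y
    by_cases hy : y ∈ S
    · obtain ⟨n0, hn0⟩ : ∃ n, y ∈ s n := by
        rw [← mem_iUnion, hU]; exact hy
      apply le_antisymm
      · refine iSup_le fun n => ?_
        rw [indicator_of_mem hy]
        exact indicator_le_self _ _ y
      · rw [indicator_of_mem hy]
        calc f y = (s n0).indicator f y := (indicator_of_mem hn0 f).symm
          _ ≤ ⨆ n, (s n).indicator f y := le_iSup (fun n => (s n).indicator f y) n0
    · have : ∀ n, y ∉ s n := by
        intro n hn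
        exact hy (hU ▸ mem_iUnion.2 ⟨n, hn⟩)
      simp [indicator_of_notMem hy, indicator_of_notMem (this _)]
  calc ⨆ n, ∫⁻ y in s n, f y = ⨆ n, ∫⁻ y, (s n).indicator f y := by
        simp_rw [lintegral_indicator (hm _)]
    _ = ∫⁻ y, ⨆ n, (s n).indicator f y := by
        rw [lintegral_iSup (fun n => hf.indicator (hm n))]
        intro a b hab y
        exact indicator_le_indicator_of_subset (hmono hab) (fun _ => zero_le) y
    _ = ∫⁻ y, S.indicator f y := by simp_rw [hpt]
    _ = ∫⁻ y in S, f y := lintegral_indicator hSm f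

lemma N_zero (X : RINorm) : X.N (fun _ => 0) = 0 :=
  (X.eq_zero_iff (fun _ => 0) measurable_const).2 (Filter.Eventually.of_forall fun _ => rfl)

lemma N_sum_le (X : RINorm) (u : ℕ → ℝ → ℝ≥0∞) (hu : ∀ k, Measurable (u k)) (M : ℕ) :
    X.N (fun x => ∑ k ∈ Finset.range M, u k x) ≤ ∑ k ∈ Finset.range M, X.N (u k) := by
  induction M with
  | zero => simp only [Finset.range_zero, Finset.sum_empty]; rw [N_zero]
  | succ M ih =>
    have heq : (fun x => ∑ k ∈ Finset.range (M+1), u k x)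
        = fun x => (∑ k ∈ Finset.range M, u k x) + u M x := by
      funext x; rw [Finset.sum_range_succ]
    rw [heq, Finset.sum_range_succ]
    refine le_trans (X.add_le _ _ (Finset.measurable_sum _ fun k _ => hu k) (hu M)) ?_
    exact add_le_add ih le_rfl

lemma rearr_embedding (X : RINorm) (g : ℝ → ℝ≥0∞) (hg : Measurable g) (t : ℝ)
    (h0 : 0 < t) (ht : t < 1) :
    ((ENNReal.ofReal t)⁻¹ * ∫⁻ s in Ioo (0:ℝ) t, decRearr g s)
        * X.N ((Ioo (0:ℝ) t).indicator fun _ => 1) ≤ X.N g := by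
  set f := decRearr g with hfdef
  have hfA : Antitone f := decRearr_antitone g
  have hfm : Measurable f := decRearr_measurable g
  have hNfg : X.N f = X.N g :=
    X.equimeasurable f g hfm hg (fun lam _ => decRearr_equimeasurable g hg lam)
  obtain ⟨c, hc, hcle⟩ := X.lintegral_le
  by_cases hfin : (∫⁻ s in Ioo (0:ℝ) t, f s) = ⊤
  · have h1 : (∫⁻ s in Ioo (0:ℝ) 1, f s) = ⊤ :=
      top_le_iff.1 (hfin ▸ lintegral_mono_set (Ioo_subset_Ioo le_rfl ht.le))
    have h2 : (⊤:ℝ≥0∞) ≤ (c:ℝ≥0∞) * X.N f := h1 ▸ hcle f hfm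
    have h3 : X.N g = ⊤ := by
      by_contra hc2
      have : (c:ℝ≥0∞) * X.N f < ⊤ :=
        ENNReal.mul_lt_top ENNReal.coe_lt_top (hNfg ▸ lt_top_iff_ne_top.2 hc2)
      exact absurd (lt_of_le_of_lt h2 this) (lt_irrefl _)
    rw [h3]; exact le_top
  · set A := (ENNReal.ofReal t)⁻¹ * ∫⁻ s in Ioo (0:ℝ) t, f s with hA
    have htne : ENNReal.ofReal t ≠ 0 := by
      simp only [ne_eq, ENNReal.ofReal_eq_zero, not_le]; exact h0
    have htne' : ENNReal.ofReal t ≠ ⊤ := ENNReal.ofReal_ne_top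
    have hAne : A ≠ ⊤ := ENNReal.mul_ne_top (ENNReal.inv_ne_top.2 htne) hfin
    -- the averaged shift functions
    set SumF : ℕ → ℝ → ℝ≥0∞ :=
      fun n x => ∑ k ∈ Finset.range (n+1), shiftF f t (k * (t/(n+1))) x with hSumF
    set H : ℕ → ℝ → ℝ≥0∞ :=
      fun n x => (((((n+1:ℕ):ℝ≥0))⁻¹ : ℝ≥0) : ℝ≥0∞) * SumF n x with hH
    have hSumFm : ∀ n, Measurable (SumF n) :=
      fun n => Finset.measurable_sum _ (fun k _ => shiftF_measurable f hfm t _)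
    have hHm : ∀ n, Measurable (H n) := fun n => (hSumFm n).const_mul _
    set B : ℕ → ℝ≥0∞ :=
      fun n => (ENNReal.ofReal t)⁻¹ * ∫⁻ y in Ioc (t/(n+1)) t, f y with hB
    have hBmono : Monotone B := by
      intro a b hab
      refine mul_le_mul_right (lintegral_mono_set (Ioc_subset_Ioc_left ?_)) _
      have hle : ((a:ℝ)+1) ≤ (b:ℝ)+1 := by exact_mod_cast Nat.succ_le_succ hab
      exact div_le_div_of_nonneg_left h0.le (by positivity) hle
    have hcoeff : ∀ n : ℕ, (ENNReal.ofReal t)⁻¹ * ENNReal.ofReal (t/(n+1))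
        = (((((n+1:ℕ):ℝ≥0))⁻¹ : ℝ≥0) : ℝ≥0∞) := by
      intro n
      have hn1 : (0:ℝ) < (n:ℝ) + 1 := by positivity
      rw [ENNReal.ofReal_div_of_pos hn1, div_eq_mul_inv, ← mul_assoc,
        ENNReal.inv_mul_cancel htne htne', one_mul,
        ENNReal.coe_inv (by exact_mod_cast Nat.succ_ne_zero n)]
      congr 1
      have hcast : ((n:ℝ)+1) = ((n+1:ℕ):ℝ) := by push_cast; ring
      rw [hcast, ENNReal.ofReal_natCast]
      exact (ENNReal.coe_natCast (n+1)).symm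
    have hHB : ∀ n, ∀ x ∈ Ioo (0:ℝ) t, B n ≤ H n x := by
      intro n x hx
      have h1 := shift_sum_lb f hfA t h0 n x hx
      calc B n ≤ (ENNReal.ofReal t)⁻¹ * (ENNReal.ofReal (t/(n+1)) * SumF n x) :=
            mul_le_mul_right h1 _
        _ = ((ENNReal.ofReal t)⁻¹ * ENNReal.ofReal (t/(n+1))) * SumF n x := by ring
        _ = H n x := by rw [hcoeff n]
    set F : ℕ → ℝ → ℝ≥0∞ := fun j x => ⨅ i : ℕ, H (j + i) x with hF
    have hFm : ∀ j, Measurable (F j) := fun j => Measurable.iInf (fun i => hHm _)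
    have hFmono : ∀ j x, F j x ≤ F (j+1) x := by
      intro j x
      refine le_iInf fun i => ?_
      have h1 : F j x ≤ H (j + (1 + i)) x := iInf_le _ (1 + i)
      rwa [show j + (1 + i) = j + 1 + i by omega] at h1
    set G : ℝ → ℝ≥0∞ := fun x => ⨆ j, F j x with hG
    have hGm : Measurable G := Measurable.iSup (fun j => hFm j)
    have hBF : ∀ j, ∀ x ∈ Ioo (0:ℝ) t, B j ≤ F j x := by
      intro j x hx
      exact le_iInf fun i => le_trans (hBmono (Nat.le_add_right j i)) (hHB (j+i) x hx)
    have hsupB : (⨆ j, B j) = A := by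
      rw [hB, hA, ← ENNReal.mul_iSup]
      congr 1
      have := lintegral_iSup_sets f hfm (fun j => Ioc (t/(j+1)) t) (Ioc 0 t)
        (fun j => measurableSet_Ioc) ?_ ?_
      · rw [this]
        exact (setLIntegral_congr Ioo_ae_eq_Ioc).symm
      · intro a b hab
        refine Ioc_subset_Ioc_left ?_
        have hle : ((a:ℝ)+1) ≤ (b:ℝ)+1 := by exact_mod_cast Nat.succ_le_succ hab
        exact div_le_div_of_nonneg_left h0.le (by positivity) hle
      · ext y
        simp only [mem_iUnion, mem_Ioc]
        constructor
        · rintro ⟨j, h1, h2⟩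
          exact ⟨lt_trans (by positivity) h1, h2⟩
        · rintro ⟨h1, h2⟩
          obtain ⟨j, hj⟩ := exists_nat_gt (t / y)
          refine ⟨j, ?_, h2⟩
          have hty : t < ((j:ℝ) + 1) * y := by
            have h3 : t / y * y = t := div_mul_cancel₀ t (ne_of_gt h1)
            nlinarith
          exact (div_lt_iff₀ (by positivity)).2 (by linarith)
    have hAG : ∀ x ∈ Ioo (0:ℝ) t, A ≤ G x := by
      intro x hx
      rw [← hsupB]
      exact iSup_mono (fun j => hBF j x hx)
    -- norm estimates
    have hNF : ∀ j, X.N (F j) ≤ X.N f := by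
      intro j
      have s1 : X.N (F j) ≤ X.N (H j) := by
        refine X.mono _ _ (hFm j) (hHm j) (Filter.Eventually.of_forall fun x => ?_)
        have h1 : F j x ≤ H (j + 0) x := iInf_le _ 0
        simpa using h1
      have s2 : X.N (H j) = (((((j+1:ℕ):ℝ≥0))⁻¹ : ℝ≥0) : ℝ≥0∞) * X.N (SumF j) :=
        X.smul_eq (SumF j) (hSumFm j) _
      have s3 : X.N (SumF j) ≤ (j+1 : ℕ) * X.N f := by
        refine le_trans (N_sum_le X _ (fun k => shiftF_measurable f hfm t _) (j+1)) ?_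
        have heach : ∀ k ∈ Finset.range (j+1), X.N (shiftF f t (k * (t/(j+1)))) = X.N f := by
          intro k hk
          have hk' : k ≤ j := Nat.lt_succ_iff.1 (Finset.mem_range.1 hk)
          refine X.equimeasurable _ f (shiftF_measurable f hfm t _) hfm (fun lam _ => ?_)
          refine shiftF_equi f hfm t (k * (t/(j+1))) h0 ht (by positivity) ?_ lam
          have hkj : (k:ℝ) ≤ j := by exact_mod_cast hk'
          have hj1 : (0:ℝ) < (j:ℝ) + 1 := by positivity
          rw [div_eq_mul_inv]
          have h2 : (k:ℝ) * (t * ((j:ℝ)+1)⁻¹) ≤ (j:ℝ) * (t * ((j:ℝ)+1)⁻¹) :=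
            mul_le_mul_of_nonneg_right hkj (by positivity)
          have h4 : (j:ℝ) * ((j:ℝ)+1)⁻¹ < 1 := by
            rw [← div_eq_mul_inv]
            exact (div_lt_one hj1).2 (by linarith)
          have h3 : (j:ℝ) * (t * ((j:ℝ)+1)⁻¹) < t := by
            have h5 : t * ((j:ℝ) * ((j:ℝ)+1)⁻¹) < t * 1 := by
              exact mul_lt_mul_of_pos_left h4 h0
            nlinarith
          linarith
        rw [Finset.sum_congr rfl heach, Finset.sum_const, Finset.card_range, nsmul_eq_mul]
      calc X.N (F j) ≤ (((((j+1:ℕ):ℝ≥0))⁻¹ : ℝ≥0) : ℝ≥0∞) * X.N (SumF j) := s2 ▸ s1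
        _ ≤ (((((j+1:ℕ):ℝ≥0))⁻¹ : ℝ≥0) : ℝ≥0∞) * ((j+1 : ℕ) * X.N f) := mul_le_mul_right s3 _
        _ = X.N f := by
            rw [← mul_assoc]
            have h1 : (((((j+1:ℕ):ℝ≥0))⁻¹ : ℝ≥0) : ℝ≥0∞) * ((j+1:ℕ) : ℝ≥0∞) = 1 := by
              have hne0 : (((j+1:ℕ):ℝ≥0) : ℝ≥0∞) ≠ 0 := by exact_mod_cast Nat.succ_ne_zero j
              rw [ENNReal.coe_inv (by exact_mod_cast Nat.succ_ne_zero j),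
                show ((j+1:ℕ) : ℝ≥0∞) = (((j+1:ℕ):ℝ≥0) : ℝ≥0∞) from (ENNReal.coe_natCast (j+1)).symm]
              exact ENNReal.inv_mul_cancel hne0 ENNReal.coe_ne_top
            rw [h1, one_mul]
    have hNG : X.N G ≤ X.N f := by
      have hfatou := X.fatou F G hFm hGm (fun j x => hFmono j x)
        (Filter.Eventually.of_forall fun x => rfl)
      rw [← hfatou]
      exact iSup_le hNF
    -- conclude
    set a : ℝ≥0 := A.toNNReal with ha
    have hcoeA : (a:ℝ≥0∞) = A := ENNReal.coe_toNNReal hAne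
    have hNh : X.N (fun x => (a:ℝ≥0∞) * (Ioo (0:ℝ) t).indicator (fun _ => 1) x)
        = (a:ℝ≥0∞) * X.N ((Ioo (0:ℝ) t).indicator fun _ => 1) :=
      X.smul_eq _ (measurable_const.indicator measurableSet_Ioo) a
    have hhG : X.N (fun x => (a:ℝ≥0∞) * (Ioo (0:ℝ) t).indicator (fun _ => 1) x) ≤ X.N G := by
      refine X.mono _ _ ((measurable_const.indicator measurableSet_Ioo).const_mul _) hGm
        (Filter.Eventually.of_forall fun x => ?_)
      by_cases hx : x ∈ Ioo (0:ℝ) t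
      · rw [indicator_of_mem hx, mul_one, hcoeA]
        exact hAG x hx
      · rw [indicator_of_notMem hx, mul_zero]
        exact zero_le
    calc A * X.N ((Ioo (0:ℝ) t).indicator fun _ => 1)
        = (a:ℝ≥0∞) * X.N ((Ioo (0:ℝ) t).indicator fun _ => 1) := by rw [hcoeA]
      _ = X.N (fun x => (a:ℝ≥0∞) * (Ioo (0:ℝ) t).indicator (fun _ => 1) x) := hNh.symm
      _ ≤ X.N G := hhG
      _ ≤ X.N f := hNG
      _ = X.N g := hNfg


end helpers

open Set in
/-- if `(∫_0^t ds/I(s))^m ≤ C N(χ_(0,t))`, then `∫_0^1 ds/I(s) < ∞` and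
`sup_t g**(t) (∫_0^t ds/I(s))^m ≤ C' N(g)` for every measurable `g`. -/
theorem fundamental_estimate_implies_marcinkiewicz (m : ℕ) (hm : 2 ≤ m) (I : ℝ → ℝ)
    (hIpos : ∀ t ∈ Set.Ioo (0:ℝ) 1, 0 < I t)
    (hImono : MonotoneOn I (Set.Ioo (0:ℝ) 1))
    (X : RINorm) (C : ℝ≥0) (hC : 0 < C)
    (hfund : ∀ t ∈ Set.Ioo (0:ℝ) 1,
      (∫⁻ s in Set.Ioo (0:ℝ) t, (ENNReal.ofReal (I s))⁻¹) ^ m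
        ≤ (C : ℝ≥0∞) * X.N ((Set.Ioo (0:ℝ) t).indicator fun _ => 1)) :
    (∫⁻ s in Set.Ioo (0:ℝ) 1, (ENNReal.ofReal (I s))⁻¹) < ⊤ ∧
    ∃ C' : ℝ≥0, 0 < C' ∧
      ∀ g : ℝ → ℝ≥0∞, Measurable g → ∀ t ∈ Set.Ioo (0:ℝ) 1,
        ((ENNReal.ofReal t)⁻¹ * ∫⁻ s in Set.Ioo (0:ℝ) t, decRearr g s) *
            (∫⁻ s in Set.Ioo (0:ℝ) t, (ENNReal.ofReal (I s))⁻¹) ^ m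
          ≤ (C' : ℝ≥0∞) * X.N g := by
  have hmne : (m:ℝ) ≠ 0 := by positivity
  set J : ℝ → ℝ≥0∞ := fun s => (ENNReal.ofReal (I s))⁻¹ with hJ
  set B : ℝ≥0∞ := X.N ((Set.Ioo (0:ℝ) 1).indicator fun _ => 1) with hB
  have hBlt : B < ⊤ := X.chi_lt_top
  -- uniform bound on partial integrals
  set R : ℝ≥0∞ := ((C:ℝ≥0∞) * B) ^ (1/(m:ℝ)) with hR
  have hRlt : R < ⊤ :=
    ENNReal.rpow_lt_top_of_nonneg (by positivity)
      (ENNReal.mul_ne_top ENNReal.coe_ne_top hBlt.ne)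
  have hpartial : ∀ t ∈ Set.Ioo (0:ℝ) 1, (∫⁻ s in Set.Ioo (0:ℝ) t, J s) ≤ R := by
    intro t ht
    have h1 := hfund t ht
    have h2 : X.N ((Set.Ioo (0:ℝ) t).indicator fun _ => 1) ≤ B := by
      refine X.mono _ _ (measurable_const.indicator measurableSet_Ioo)
        (measurable_const.indicator measurableSet_Ioo)
        (Filter.Eventually.of_forall fun x => ?_)
      exact indicator_le_indicator_of_subset (Ioo_subset_Ioo le_rfl ht.2.le)
        (fun _ => zero_le) x
    have h3 : (∫⁻ s in Set.Ioo (0:ℝ) t, J s) ^ m ≤ (C:ℝ≥0∞) * B :=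
      le_trans h1 (mul_le_mul_right h2 _)
    set x := ∫⁻ s in Set.Ioo (0:ℝ) t, J s with hx
    have h4 : x = (x ^ (m:ℝ)) ^ (1/(m:ℝ)) := by
      rw [← ENNReal.rpow_natCast x m] at *
      rw [← ENNReal.rpow_mul, mul_one_div_cancel hmne, ENNReal.rpow_one]
    rw [h4]
    refine ENNReal.rpow_le_rpow ?_ (by positivity)
    rw [ENNReal.rpow_natCast]
    exact h3
  constructor
  · -- finiteness of ∫ 1/I
    have haeI : AEMeasurable I (volume.restrict (Set.Ioo (0:ℝ) 1)) :=
      aemeasurable_restrict_of_monotoneOn measurableSet_Ioo hImono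
    have haeJ : AEMeasurable J (volume.restrict (Set.Ioo (0:ℝ) 1)) :=
      (ENNReal.measurable_ofReal.comp_aemeasurable haeI).inv
    set Jm : ℝ → ℝ≥0∞ := haeJ.mk J with hJm
    have hJmm : Measurable Jm := haeJ.measurable_mk
    have hJeq : J =ᵐ[volume.restrict (Set.Ioo (0:ℝ) 1)] Jm := haeJ.ae_eq_mk
    set tn : ℕ → ℝ := fun n => 1 - 1/((n:ℝ)+2) with htn
    have htn_mem : ∀ n, tn n ∈ Set.Ioo (0:ℝ) 1 := by
      intro n
      constructor
      · have : 1/((n:ℝ)+2) ≤ 1/2 := by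
          apply div_le_div_of_nonneg_left one_pos.le two_pos
          push_cast; linarith [Nat.cast_nonneg (α := ℝ) n]
        simp only [htn]; linarith
      · simp only [htn]
        have : 0 < 1/((n:ℝ)+2) := by positivity
        linarith
    have hsup : (⨆ n, ∫⁻ s in Set.Ioo (0:ℝ) (tn n), Jm s)
        = ∫⁻ s in Set.Ioo (0:ℝ) 1, Jm s := by
      refine lintegral_iSup_sets Jm hJmm _ _ (fun n => measurableSet_Ioo) ?_ ?_
      · intro a b hab
        refine Ioo_subset_Ioo le_rfl ?_
        simp only [htn]
        have h1 : 1/((b:ℝ)+2) ≤ 1/((a:ℝ)+2) := by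
          apply div_le_div_of_nonneg_left one_pos.le (by positivity)
          have : ((a:ℝ)) ≤ (b:ℝ) := by exact_mod_cast hab
          linarith
        linarith
      · ext y
        simp only [mem_iUnion, mem_Ioo]
        constructor
        · rintro ⟨n, h1, h2⟩
          exact ⟨h1, lt_of_lt_of_le h2 (by linarith [(htn_mem n).2.le])⟩
        · rintro ⟨h1, h2⟩
          obtain ⟨n, hn⟩ := exists_nat_gt (1/(1 - y))
          refine ⟨n, h1, ?_⟩
          simp only [htn]
          have hy1 : 0 < 1 - y := by linarith
          have h3 : 1/(1-y) < (n:ℝ) + 2 := by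
            have : (0:ℝ) < 1/(1-y) := by positivity
            linarith
          have h4 : 1/((n:ℝ)+2) < 1 - y := by
            rw [div_lt_iff₀ (by positivity)]
            have hkey : (1/(1-y)) * (1-y) = 1 := div_mul_cancel₀ 1 (ne_of_gt hy1)
            nlinarith
          linarith
    have hcongr : ∀ n, (∫⁻ s in Set.Ioo (0:ℝ) (tn n), J s)
        = ∫⁻ s in Set.Ioo (0:ℝ) (tn n), Jm s := by
      intro n
      refine lintegral_congr_ae ?_
      exact ae_restrict_of_ae_restrict_of_subset (Ioo_subset_Ioo le_rfl (htn_mem n).2.le) hJeq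
    calc (∫⁻ s in Set.Ioo (0:ℝ) 1, J s) = ∫⁻ s in Set.Ioo (0:ℝ) 1, Jm s :=
          lintegral_congr_ae hJeq
      _ = ⨆ n, ∫⁻ s in Set.Ioo (0:ℝ) (tn n), Jm s := hsup.symm
      _ = ⨆ n, ∫⁻ s in Set.Ioo (0:ℝ) (tn n), J s := by simp_rw [hcongr]
      _ ≤ R := iSup_le (fun n => hpartial (tn n) (htn_mem n))
      _ < ⊤ := hRlt
  · refine ⟨C, hC, fun g hg t ht => ?_⟩
    calc ((ENNReal.ofReal t)⁻¹ * ∫⁻ s in Set.Ioo (0:ℝ) t, decRearr g s) *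
            (∫⁻ s in Set.Ioo (0:ℝ) t, J s) ^ m
        ≤ ((ENNReal.ofReal t)⁻¹ * ∫⁻ s in Set.Ioo (0:ℝ) t, decRearr g s) *
            ((C:ℝ≥0∞) * X.N ((Set.Ioo (0:ℝ) t).indicator fun _ => 1)) :=
          mul_le_mul_right (hfund t ht) _
      _ = (C:ℝ≥0∞) * (((ENNReal.ofReal t)⁻¹ * ∫⁻ s in Set.Ioo (0:ℝ) t, decRearr g s) *
            X.N ((Set.Ioo (0:ℝ) t).indicator fun _ => 1)) := by ring
      _ ≤ (C:ℝ≥0∞) * X.N g :=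
          mul_le_mul_right (rearr_embedding X g hg t ht.1 ht.2) _
end

section
/- Let m ∈ ℕ, m ≥ 1, let I be a positive nondecreasing function on (0,1), and let N be a rearrangement-invariant function norm on (0,1) with associate functional N'. Suppose there exists a constant C > 0 such that N(g · H_I^m f) ≤ C · N(f) · N(g) for all nonnegative measurable functions f, g on (0,1). Then N'(h_m) ≤ (m−1)! · C, where h_m(t) = (1/I(t)) (∫_0^t ds/I(s))^{m−1} for t ∈ (0,1). -/
open MeasureTheory ENNReal NNReal

lemma hardy_lemA (ν : Measure ℝ) [IsFiniteMeasure ν] [NullSingletonClass ν] (k : ℕ) :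
    ν Set.univ ^ (k + 1) ≤ (k + 1 : ℕ) * ∫⁻ r, ν (Set.Ioi r) ^ k ∂ν := by
  set n := k + 1 with hn
  set μ : Measure (Fin n → ℝ) := Measure.pi fun _ => ν with hμ
  set S : Fin n → Set (Fin n → ℝ) := fun i => {x | ∀ j, j ≠ i → x i < x j} with hS
  have hSm : ∀ i, MeasurableSet (S i) := by
    intro i
    have : S i = ⋂ (j : Fin n), ⋂ (_ : j ≠ i), {x : Fin n → ℝ | x i < x j} := by
      ext x; simp [hS]
    rw [this]
    exact MeasurableSet.iInter fun j => MeasurableSet.iInter fun _ =>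
      measurableSet_lt (measurable_pi_apply i) (measurable_pi_apply j)
  have hSval : ∀ i, μ (S i) = ∫⁻ r, ν (Set.Ioi r) ^ k ∂ν := by
    intro i
    have hmp := measurePreserving_piFinSuccAbove (fun _ : Fin n => ν) i
    set T : Set (ℝ × (Fin k → ℝ)) := {p | ∀ j, p.1 < p.2 j} with hT
    have hTm : MeasurableSet T := by
      have : T = ⋂ j : Fin k, {p : ℝ × (Fin k → ℝ) | p.1 < p.2 j} := by ext p; simp [hT]
      rw [this]
      exact MeasurableSet.iInter fun j =>
        measurableSet_lt measurable_fst ((measurable_pi_apply j).comp measurable_snd)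
    have hpre : S i = (MeasurableEquiv.piFinSuccAbove (fun _ : Fin n => ℝ) i) ⁻¹' T := by
      ext x
      simp only [hS, Set.mem_setOf_eq, Set.mem_preimage, MeasurableEquiv.piFinSuccAbove_apply,
        hT]
      constructor
      · intro h j
        exact h _ (Fin.succAbove_ne i j)
      · intro h j hj
        obtain ⟨j', rfl⟩ := Fin.exists_succAbove_eq hj
        exact h j'
    rw [hpre, hmp.measure_preimage hTm.nullMeasurableSet]
    rw [Measure.prod_apply hTm]
    have : ∀ r : ℝ, (Prod.mk r ⁻¹' T) = Set.pi Set.univ (fun _ : Fin k => Set.Ioi r) := by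
      intro r; ext y; simp [hT]
    simp_rw [this, Measure.pi_pi]
    simp [Finset.prod_const]
  have hdiag : ∀ i j : Fin n, i ≠ j → μ {x : Fin n → ℝ | x i = x j} = 0 := by
    intro i j hij
    have hmp := measurePreserving_piFinSuccAbove (fun _ : Fin n => ν) i
    obtain ⟨j', hj'⟩ := Fin.exists_succAbove_eq (Ne.symm hij)
    set D : Set (ℝ × (Fin k → ℝ)) := {p | p.1 = p.2 j'} with hD
    have hDm : MeasurableSet D :=
      measurableSet_eq_fun measurable_fst ((measurable_pi_apply j').comp measurable_snd)
    have hpre : {x : Fin n → ℝ | x i = x j} =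
        (MeasurableEquiv.piFinSuccAbove (fun _ : Fin n => ℝ) i) ⁻¹' D := by
      ext x
      simp only [Set.mem_setOf_eq, Set.mem_preimage, MeasurableEquiv.piFinSuccAbove_apply, hD,
        Fin.insertNthEquiv, Equiv.coe_fn_symm_mk, Fin.removeNth, hj']
    rw [hpre, hmp.measure_preimage hDm.nullMeasurableSet]
    rw [Measure.prod_apply hDm]
    have : ∀ r : ℝ, (Measure.pi fun _ : Fin k => ν) (Prod.mk r ⁻¹' D) = 0 := by
      intro r
      have hset : (Prod.mk r ⁻¹' D) =
          Set.pi Set.univ (fun l : Fin k => if l = j' then {r} else Set.univ) := by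
        ext y
        simp only [hD, Set.mem_preimage, Set.mem_setOf_eq, Set.mem_univ_pi]
        constructor
        · intro h l
          by_cases hl : l = j' <;> simp [hl, ← h]
        · intro h
          have := h j'
          simp at this
          exact this.symm
      rw [hset, Measure.pi_pi]
      refine Finset.prod_eq_zero (Finset.mem_univ j') ?_
      simp
    simp_rw [this]
    simp
  have hcover : (Set.univ : Set (Fin n → ℝ)) ⊆
      (⋃ i, S i) ∪ (⋃ i, ⋃ j, ⋃ (_ : i ≠ j), {x : Fin n → ℝ | x i = x j}) := by
    intro x _
    obtain ⟨i, -, hi⟩ := Finset.exists_min_image Finset.univ x ⟨0, Finset.mem_univ 0⟩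
    by_cases hx : x ∈ S i
    · exact Or.inl (Set.mem_iUnion.2 ⟨i, hx⟩)
    · right
      simp only [hS, Set.mem_setOf_eq, not_forall] at hx
      obtain ⟨j, hj, hlt⟩ := hx
      refine Set.mem_iUnion.2 ⟨i, Set.mem_iUnion.2 ⟨j, Set.mem_iUnion.2 ⟨Ne.symm hj, ?_⟩⟩⟩
      exact le_antisymm (hi j (Finset.mem_univ j)) (not_lt.1 hlt)
  calc ν Set.univ ^ (k + 1) = μ Set.univ := by
        rw [hμ, Measure.pi_univ]; simp [Finset.prod_const, hn]
    _ ≤ μ ((⋃ i, S i) ∪ (⋃ i, ⋃ j, ⋃ (_ : i ≠ j), {x : Fin n → ℝ | x i = x j})) :=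
        measure_mono hcover
    _ ≤ μ (⋃ i, S i) + μ (⋃ i, ⋃ j, ⋃ (_ : i ≠ j), {x : Fin n → ℝ | x i = x j}) :=
        measure_union_le _ _
    _ = μ (⋃ i, S i) := by
        rw [measure_iUnion_null fun i => measure_iUnion_null fun j =>
          measure_iUnion_null fun hij => hdiag i j hij, add_zero]
    _ ≤ ∑ i : Fin n, μ (S i) := measure_iUnion_fintype_le _ _
    _ = (k + 1 : ℕ) * ∫⁻ r, ν (Set.Ioi r) ^ k ∂ν := by
        simp_rw [hSval]
        simp [Finset.sum_const, hn, nsmul_eq_mul]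


/-- The associate functional `N'(g) = sup { ∫_0^1 f g : f ≥ 0 measurable, N(f) ≤ 1 }`. -/
noncomputable def assocN (X : RINorm) (g : ℝ → ℝ≥0∞) : ℝ≥0∞ :=
  ⨆ (f : ℝ → ℝ≥0∞) (_ : Measurable f ∧ X.N f ≤ 1),
    ∫⁻ s in Set.Ioo (0:ℝ) 1, f s * g s

/-- if `N(g ⬝ H_I^m f) ≤ C N(f) N(g)` for all nonnegative measurable `f, g`,
then the associate norm of `h_m(t) = (1/I(t)) (∫_0^t ds/I(s))^{m-1}` is at most `(m-1)! C`. -/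
theorem assoc_norm_bound_of_product_inequality (m : ℕ) (hm : 1 ≤ m) (I : ℝ → ℝ)
    (hIpos : ∀ t ∈ Set.Ioo (0:ℝ) 1, 0 < I t)
    (hImono : MonotoneOn I (Set.Ioo (0:ℝ) 1))
    (X : RINorm) (C : ℝ≥0) (hC : 0 < C)
    (hprod : ∀ f g : ℝ → ℝ≥0∞, Measurable f → Measurable g →
      X.N (fun t => g t * (HI I)^[m] f t) ≤ (C : ℝ≥0∞) * X.N f * X.N g) :
    assocN X (fun t => (ENNReal.ofReal (I t))⁻¹ *
        (∫⁻ s in Set.Ioo (0:ℝ) t, (ENNReal.ofReal (I s))⁻¹) ^ (m - 1))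
      ≤ ((m - 1).factorial : ℝ≥0∞) * (C : ℝ≥0∞) := by
  obtain ⟨m', rfl⟩ : ∃ m', m = m' + 1 := ⟨m - 1, (Nat.succ_pred_eq_of_pos hm).symm⟩
  -- the weight W
  set W : ℝ → ℝ≥0∞ := fun x =>
    if x ≤ 0 then ⊤ else if 1 ≤ x then 0 else (ENNReal.ofReal (I x))⁻¹ with hWdef
  have hWI : ∀ x ∈ Set.Ioo (0:ℝ) 1, W x = (ENNReal.ofReal (I x))⁻¹ := by
    intro x hx
    rw [hWdef]
    simp only [not_le.2 hx.1, if_false, not_le.2 hx.2, if_false]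
  have hWanti : Antitone W := by
    intro x y hxy
    by_cases hy0 : y ≤ 0
    · have hx0 : x ≤ 0 := le_trans hxy hy0
      simp [hWdef, hx0, hy0]
    · by_cases hy1 : 1 ≤ y
      · rw [hWdef]
        simp only [hy0, if_false, hy1, if_true]
        exact zero_le
      · have hy : y ∈ Set.Ioo (0:ℝ) 1 := ⟨not_le.1 hy0, not_le.1 hy1⟩
        by_cases hx0 : x ≤ 0
        · simp [hWdef, hx0]
        · have hx : x ∈ Set.Ioo (0:ℝ) 1 := ⟨not_le.1 hx0, lt_of_le_of_lt hxy hy.2⟩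
          rw [hWI x hx, hWI y hy]
          exact ENNReal.inv_le_inv.mpr (ENNReal.ofReal_le_ofReal (hImono hx hy hxy))
  have hW : Measurable W := hWanti.measurable
  have hWne : ∀ x ∈ Set.Ioo (0:ℝ) 1, W x ≠ ⊤ := by
    intro x hx
    rw [hWI x hx]
    exact ENNReal.inv_ne_top.2 (ENNReal.ofReal_pos.2 (hIpos x hx)).ne'
  set ν : Measure ℝ := volume.withDensity W with hνdef
  haveI : NullSingletonClass ν := by
    constructor
    intro x
    rw [hνdef, withDensity_apply _ (measurableSet_singleton x),
      Measure.restrict_eq_zero.mpr (measure_singleton x), lintegral_zero_measure]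
  have hνIoo : ∀ a b : ℝ, ν (Set.Ioo a b) = ∫⁻ x in Set.Ioo a b, W x ∂volume := by
    intro a b
    rw [hνdef, withDensity_apply _ measurableSet_Ioo]
  have hνfin : ∀ t ∈ Set.Ioo (0:ℝ) 1, ∀ s : ℝ, s ≤ 1 → ν (Set.Ioo t s) ≠ ⊤ := by
    intro t ht s hs
    have h2 : ν (Set.Ioo t 1) ≠ ⊤ := by
      rw [hνIoo]
      have h3 : (∫⁻ x in Set.Ioo t 1, W x ∂volume) ≤ ∫⁻ _ in Set.Ioo t 1, W t ∂volume :=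
        setLIntegral_mono' measurableSet_Ioo fun x hx => hWanti hx.1.le
      refine ne_top_of_le_ne_top ?_ h3
      rw [setLIntegral_const, Real.volume_Ioo]
      exact ENNReal.mul_ne_top (hWne t ht) ENNReal.ofReal_ne_top
    exact ne_top_of_le_ne_top h2 (measure_mono (Set.Ioo_subset_Ioo_right hs))
  -- measurability of (r, s) ↦ ν (Ioo r s)
  have hκm : Measurable fun p : ℝ × ℝ => ν (Set.Ioo p.1 p.2) := by
    have h1 : ∀ p : ℝ × ℝ, ν (Set.Ioo p.1 p.2)
        = ∫⁻ u, (Set.Ioo p.1 p.2).indicator W u ∂volume := by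
      intro p
      rw [hνIoo, ← lintegral_indicator measurableSet_Ioo]
    simp_rw [h1]
    have h2 : Measurable fun q : (ℝ × ℝ) × ℝ => (Set.Ioo q.1.1 q.1.2).indicator W q.2 := by
      have e : (fun q : (ℝ × ℝ) × ℝ => (Set.Ioo q.1.1 q.1.2).indicator W q.2)
          = Set.indicator {q : (ℝ × ℝ) × ℝ | q.1.1 < q.2 ∧ q.2 < q.1.2} (fun q => W q.2) := by
        funext q
        by_cases h : q.2 ∈ Set.Ioo q.1.1 q.1.2
        · rw [Set.indicator_of_mem h, Set.indicator_of_mem (by exact Set.mem_Ioo.1 h)]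
        · rw [Set.indicator_of_notMem h, Set.indicator_of_notMem
            (by intro hc; exact h (Set.mem_Ioo.2 hc))]
      rw [e]
      exact (hW.comp measurable_snd).indicator
        ((measurableSet_lt (measurable_fst.comp measurable_fst) measurable_snd).inter
          (measurableSet_lt measurable_snd (measurable_snd.comp measurable_fst)))
    exact h2.lintegral_prod_right'
  -- HI basics
  have hHIanti : ∀ h : ℝ → ℝ≥0∞, Antitone (HI I h) := by
    intro h a b hab
    exact lintegral_mono_set (Set.Ioo_subset_Ioo_left hab)
  have hHIm : ∀ h : ℝ → ℝ≥0∞, Measurable (HI I h) := fun h => (hHIanti h).measurable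
  have hHI_eq : ∀ (h : ℝ → ℝ≥0∞) (t : ℝ), 0 ≤ t →
      HI I h t = ∫⁻ r in Set.Ioo t 1, h r * W r ∂volume := by
    intro h t ht
    refine setLIntegral_congr_fun measurableSet_Ioo (fun r hr => ?_)
    rw [div_eq_mul_inv, hWI r ⟨lt_of_le_of_lt ht hr.1, hr.2⟩]
  -- the key estimate from hardy_lemA
  have key : ∀ (k : ℕ) (t s : ℝ), t ∈ Set.Ioo (0:ℝ) 1 → s ≤ 1 →
      ν (Set.Ioo t s) ^ (k + 1) ≤ (k + 1 : ℕ) *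
        ∫⁻ r in Set.Ioo t s, W r * ν (Set.Ioo r s) ^ k ∂volume := by
    intro k t s ht hs
    haveI hfin : IsFiniteMeasure (ν.restrict (Set.Ioo t s)) := by
      constructor
      rw [Measure.restrict_apply_univ]
      exact lt_of_le_of_ne le_top (hνfin t ht s hs)
    have h1 := hardy_lemA (ν.restrict (Set.Ioo t s)) k
    rw [Measure.restrict_apply_univ] at h1
    refine le_trans h1 (mul_le_mul_right (le_of_eq ?_) _)
    have h2 : (∫⁻ r, (ν.restrict (Set.Ioo t s)) (Set.Ioi r) ^ k ∂(ν.restrict (Set.Ioo t s)))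
        = ∫⁻ r in Set.Ioo t s, ν (Set.Ioo r s) ^ k ∂ν := by
      refine setLIntegral_congr_fun measurableSet_Ioo
        (fun r hr => ?_)
      rw [Measure.restrict_apply measurableSet_Ioi]
      congr 2
      ext x
      simp only [Set.mem_inter_iff, Set.mem_Ioi, Set.mem_Ioo]
      exact ⟨fun h => ⟨h.1, h.2.2⟩, fun h => ⟨h.1, lt_trans hr.1 h.1, h.2⟩⟩
    have hg : Measurable fun r : ℝ => ν (Set.Ioo r s) ^ k :=
      (hκm.comp (measurable_id.prodMk measurable_const)).pow_const k
    rw [h2, hνdef, setLIntegral_withDensity_eq_setLIntegral_mul volume hW hg measurableSet_Ioo]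
    rfl

  -- the sequence τ j ↓ 0
  set τ : ℕ → ℝ := fun j => 1 / (j + 2 : ℝ) with hτdef
  have hτmem : ∀ j, τ j ∈ Set.Ioo (0:ℝ) 1 := by
    intro j
    constructor
    · rw [hτdef]; positivity
    · rw [hτdef, div_lt_one (by positivity)]
      have : (0:ℝ) ≤ (j:ℝ) := Nat.cast_nonneg j
      linarith
  have hτanti : ∀ j j' : ℕ, j ≤ j' → τ j' ≤ τ j := by
    intro j j' h
    rw [hτdef]
    apply one_div_le_one_div_of_le (by positivity)
    have : (j:ℝ) ≤ (j':ℝ) := Nat.cast_le.2 h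
    linarith
  have hτlt : ∀ s : ℝ, 0 < s → ∃ j : ℕ, τ j < s := by
    intro s hs
    obtain ⟨n, hn⟩ := exists_nat_gt (1 / s)
    refine ⟨n, ?_⟩
    rw [hτdef]
    have h2 : 1 / s < (n : ℝ) + 2 := by linarith
    rw [div_lt_iff₀ hs] at h2
    rw [div_lt_iff₀ (by positivity : (0:ℝ) < (n:ℝ) + 2)]
    calc (1:ℝ) < ((n:ℝ) + 2) * s := h2
      _ = s * ((n:ℝ) + 2) := mul_comm _ _
  -- now fix f
  refine iSup_le fun f => iSup_le fun hf => ?_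
  obtain ⟨hfm, hf1⟩ := hf
  simp only [Nat.add_sub_cancel]
  -- Tonelli swap
  have swap : ∀ (k : ℕ) (t : ℝ), t ∈ Set.Ioo (0:ℝ) 1 →
      (∫⁻ s in Set.Ioo t 1, (f s * W s) *
          (∫⁻ r in Set.Ioo t s, W r * ν (Set.Ioo r s) ^ k ∂volume) ∂volume)
      = ∫⁻ r in Set.Ioo t 1, W r *
          (∫⁻ s in Set.Ioo r 1, f s * W s * ν (Set.Ioo r s) ^ k ∂volume) ∂volume := by
    intro k t ht
    set F : ℝ × ℝ → ℝ≥0∞ := fun p =>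
      {q : ℝ × ℝ | q.1 < q.2}.indicator
        (fun q => W q.1 * (f q.2 * W q.2 * ν (Set.Ioo q.1 q.2) ^ k)) p with hF
    have hFm : Measurable F :=
      ((hW.comp measurable_fst).mul (((hfm.comp measurable_snd).mul (hW.comp measurable_snd)).mul
        (hκm.pow_const k))).indicator (measurableSet_lt measurable_fst measurable_snd)
    have hL : ∀ s ∈ Set.Ioo t 1, (∫⁻ r in Set.Ioo t 1, F (r, s) ∂volume)
        = (f s * W s) * ∫⁻ r in Set.Ioo t s, W r * ν (Set.Ioo r s) ^ k ∂volume := by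
      intro s hs
      have e1 : (fun r => F (r, s)) = (Set.Iio s).indicator
          (fun r => W r * (f s * W s * ν (Set.Ioo r s) ^ k)) := by
        funext r
        simp only [hF]
        by_cases h : r < s
        · rw [Set.indicator_of_mem (by exact h), Set.indicator_of_mem (by exact h)]
        · rw [Set.indicator_of_notMem (by exact h), Set.indicator_of_notMem (by exact h)]
      rw [e1, lintegral_indicator measurableSet_Iio,
        Measure.restrict_restrict measurableSet_Iio]
      have e2 : Set.Iio s ∩ Set.Ioo t 1 = Set.Ioo t s := by
        ext x
        simp only [Set.mem_inter_iff, Set.mem_Iio, Set.mem_Ioo]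
        exact ⟨fun h => ⟨h.2.1, h.1⟩, fun h => ⟨h.2, h.1, lt_trans h.2 hs.2⟩⟩
      rw [e2]
      have e3 : ∀ r, W r * (f s * W s * ν (Set.Ioo r s) ^ k)
          = (f s * W s) * (W r * ν (Set.Ioo r s) ^ k) := fun r => by ring
      simp_rw [e3]
      exact lintegral_const_mul _
        (hW.mul ((hκm.comp (measurable_id.prodMk measurable_const)).pow_const k))
    have hR : ∀ r ∈ Set.Ioo t 1, (∫⁻ s in Set.Ioo t 1, F (r, s) ∂volume)
        = W r * ∫⁻ s in Set.Ioo r 1, f s * W s * ν (Set.Ioo r s) ^ k ∂volume := by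
      intro r hr
      have e1 : (fun s => F (r, s)) = (Set.Ioi r).indicator
          (fun s => W r * (f s * W s * ν (Set.Ioo r s) ^ k)) := by
        funext s
        simp only [hF]
        by_cases h : r < s
        · rw [Set.indicator_of_mem (by exact h), Set.indicator_of_mem (by exact h)]
        · rw [Set.indicator_of_notMem (by exact h), Set.indicator_of_notMem (by exact h)]
      rw [e1, lintegral_indicator measurableSet_Ioi,
        Measure.restrict_restrict measurableSet_Ioi]
      have e2 : Set.Ioi r ∩ Set.Ioo t 1 = Set.Ioo r 1 := by
        ext x
        simp only [Set.mem_inter_iff, Set.mem_Ioi, Set.mem_Ioo]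
        exact ⟨fun h => ⟨h.1, h.2.2⟩, fun h => ⟨h.1, lt_trans hr.1 h.1, h.2⟩⟩
      rw [e2]
      exact lintegral_const_mul _
        ((hfm.mul hW).mul ((hκm.comp (measurable_const.prodMk measurable_id)).pow_const k))
    calc (∫⁻ s in Set.Ioo t 1, (f s * W s) *
            (∫⁻ r in Set.Ioo t s, W r * ν (Set.Ioo r s) ^ k ∂volume) ∂volume)
        = ∫⁻ s in Set.Ioo t 1, ∫⁻ r in Set.Ioo t 1, F (r, s) ∂volume ∂volume :=
          setLIntegral_congr_fun measurableSet_Ioo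
            (fun s hs => (hL s hs).symm)
      _ = ∫⁻ r in Set.Ioo t 1, ∫⁻ s in Set.Ioo t 1, F (r, s) ∂volume ∂volume :=
          lintegral_lintegral_swap ((hFm.comp measurable_swap).aemeasurable)
      _ = _ := setLIntegral_congr_fun measurableSet_Ioo
            (fun r hr => hR r hr)
  -- step 1 : the iterated kernel lower bound
  have step1 : ∀ (k : ℕ) (t : ℝ), t ∈ Set.Ioo (0:ℝ) 1 →
      (∫⁻ s in Set.Ioo t 1, f s * W s * ν (Set.Ioo t s) ^ k ∂volume)
        ≤ (k.factorial : ℝ≥0∞) * (HI I)^[k + 1] f t := by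
    intro k
    induction k with
    | zero =>
      intro t ht
      rw [Function.iterate_one, hHI_eq f t ht.1.le]
      simp only [pow_zero, mul_one, Nat.factorial_zero, Nat.cast_one, one_mul, le_refl]
    | succ k ih =>
      intro t ht
      have h1 : (∫⁻ s in Set.Ioo t 1, f s * W s * ν (Set.Ioo t s) ^ (k + 1) ∂volume)
          ≤ ∫⁻ s in Set.Ioo t 1, ((k + 1 : ℕ) : ℝ≥0∞) * ((f s * W s) *
              ∫⁻ r in Set.Ioo t s, W r * ν (Set.Ioo r s) ^ k ∂volume) ∂volume := by
        refine setLIntegral_mono' measurableSet_Ioo fun s hs => ?_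
        calc f s * W s * ν (Set.Ioo t s) ^ (k + 1)
            ≤ f s * W s * (((k + 1 : ℕ) : ℝ≥0∞) *
                ∫⁻ r in Set.Ioo t s, W r * ν (Set.Ioo r s) ^ k ∂volume) :=
              mul_le_mul_right (key k t s ht hs.2.le) _
          _ = ((k + 1 : ℕ) : ℝ≥0∞) * ((f s * W s) *
                ∫⁻ r in Set.Ioo t s, W r * ν (Set.Ioo r s) ^ k ∂volume) := by ring
      rw [lintegral_const_mul' _ _ (ENNReal.natCast_ne_top (k + 1)), swap k t ht] at h1
      have hHk : Measurable ((HI I)^[k + 1] f) := by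
        rw [Function.iterate_succ_apply']
        exact hHIm _
      have h3 : (∫⁻ r in Set.Ioo t 1, W r *
            (∫⁻ s in Set.Ioo r 1, f s * W s * ν (Set.Ioo r s) ^ k ∂volume) ∂volume)
          ≤ ∫⁻ r in Set.Ioo t 1, W r *
              ((k.factorial : ℝ≥0∞) * (HI I)^[k + 1] f r) ∂volume :=
        setLIntegral_mono' measurableSet_Ioo fun r hr =>
          mul_le_mul_right (ih r ⟨lt_trans ht.1 hr.1, hr.2⟩) _
      have h4 : (∫⁻ r in Set.Ioo t 1, W r *
            ((k.factorial : ℝ≥0∞) * (HI I)^[k + 1] f r) ∂volume)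
          = (k.factorial : ℝ≥0∞) * (HI I)^[k + 1 + 1] f t := by
        have e : ∀ r, W r * ((k.factorial : ℝ≥0∞) * (HI I)^[k + 1] f r)
            = (k.factorial : ℝ≥0∞) * ((HI I)^[k + 1] f r * W r) := fun r => by ring
        simp_rw [e]
        rw [lintegral_const_mul (f := fun r => (HI I)^[k + 1] f r * W r) _ (hHk.mul hW), ← hHI_eq _ t ht.1.le,
          Function.iterate_succ_apply' (HI I) (k + 1) f]
      refine le_trans h1 ?_
      calc ((k + 1 : ℕ) : ℝ≥0∞) * ∫⁻ r in Set.Ioo t 1, W r *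
              (∫⁻ s in Set.Ioo r 1, f s * W s * ν (Set.Ioo r s) ^ k ∂volume) ∂volume
          ≤ ((k + 1 : ℕ) : ℝ≥0∞) * ((k.factorial : ℝ≥0∞) * (HI I)^[k + 1 + 1] f t) :=
            mul_le_mul_right (le_of_le_of_eq h3 h4) _
        _ = ((k + 1).factorial : ℝ≥0∞) * (HI I)^[k + 1 + 1] f t := by
            rw [Nat.factorial_succ, Nat.cast_mul, mul_assoc]
  -- step 2 : pointwise bound on the iterated operator
  have hHm_meas : Measurable ((HI I)^[m' + 1] f) := by
    rw [Function.iterate_succ_apply']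
    exact hHIm _
  have hHm_anti : Antitone ((HI I)^[m' + 1] f) := by
    rw [Function.iterate_succ_apply']
    exact hHIanti _
  have step2 : ∀ t ∈ Set.Ioo (0:ℝ) 1, (HI I)^[m' + 1] f t ≤ (C : ℝ≥0∞) := by
    intro t ht
    set g : ℝ → ℝ≥0∞ := (Set.Ioo (0:ℝ) t).indicator (fun _ => 1) with hgdef
    have hgm : Measurable g := measurable_const.indicator measurableSet_Ioo
    have hgle : ∀ s, g s ≤ (Set.Ioo (0:ℝ) 1).indicator (fun _ => (1:ℝ≥0∞)) s := fun s =>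
      Set.indicator_le_indicator_of_subset (Set.Ioo_subset_Ioo_right ht.2.le)
        (fun _ => zero_le) s
    have hNgfin : X.N g ≠ ⊤ :=
      ne_top_of_le_ne_top X.chi_lt_top.ne
        (X.mono g _ hgm (measurable_const.indicator measurableSet_Ioo)
          (Filter.Eventually.of_forall hgle))
    have hNgpos : X.N g ≠ 0 := by
      intro h0
      rw [X.eq_zero_iff g hgm, ae_iff] at h0
      have hset : {a : ℝ | ¬ g a = 0} = Set.Ioo (0:ℝ) t := by
        ext a
        simp [hgdef, Set.indicator_apply_eq_zero, Set.mem_Ioo]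
      rw [hset, Measure.restrict_apply measurableSet_Ioo,
        Set.inter_eq_self_of_subset_left (Set.Ioo_subset_Ioo_right ht.2.le),
        Real.volume_Ioo] at h0
      have hpos : (0:ℝ≥0∞) < ENNReal.ofReal (t - 0) := by
        rw [sub_zero]
        exact ENNReal.ofReal_pos.2 ht.1
      exact hpos.ne' h0
    refine ENNReal.le_of_forall_nnreal_lt fun c hc => ?_
    have hpt : ∀ s, (c : ℝ≥0∞) * g s ≤ g s * (HI I)^[m' + 1] f s := by
      intro s
      by_cases hsmem : s ∈ Set.Ioo (0:ℝ) t
      · rw [hgdef, Set.indicator_of_mem hsmem, mul_one, one_mul]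
        exact le_trans hc.le (hHm_anti hsmem.2.le)
      · rw [hgdef, Set.indicator_of_notMem hsmem, mul_zero, zero_mul]
    have h1 := X.mono _ _ (hgm.const_mul _) (hgm.mul hHm_meas)
      (Filter.Eventually.of_forall hpt)
    rw [X.smul_eq g hgm c] at h1
    have h2 := hprod f g hfm hgm
    have h3 : (C : ℝ≥0∞) * X.N f * X.N g ≤ (C : ℝ≥0∞) * X.N g := by
      calc (C : ℝ≥0∞) * X.N f * X.N g ≤ (C : ℝ≥0∞) * 1 * X.N g :=
            mul_le_mul_left (mul_le_mul_right hf1 _) _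
        _ = (C : ℝ≥0∞) * X.N g := by rw [mul_one]
    exact (ENNReal.mul_le_mul_iff_left hNgpos hNgfin).1 (le_trans h1 (le_trans h2 h3))
  -- rewrite the goal integral
  have hgoal_eq : (∫⁻ s in Set.Ioo (0:ℝ) 1, f s * ((ENNReal.ofReal (I s))⁻¹ *
        (∫⁻ u in Set.Ioo (0:ℝ) s, (ENNReal.ofReal (I u))⁻¹ ∂volume) ^ m') ∂volume)
      = ∫⁻ s in Set.Ioo (0:ℝ) 1, f s * (W s * ν (Set.Ioo 0 s) ^ m') ∂volume := by
    refine setLIntegral_congr_fun measurableSet_Ioo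
      (fun s hs => ?_)
    have einner : (∫⁻ u in Set.Ioo (0:ℝ) s, (ENNReal.ofReal (I u))⁻¹ ∂volume)
        = ν (Set.Ioo 0 s) := by
      rw [hνIoo]
      exact setLIntegral_congr_fun measurableSet_Ioo (fun u hu =>
        (hWI u ⟨hu.1, lt_trans hu.2 hs.2⟩).symm)
    rw [einner, ← hWI s hs]
  -- the approximating sequence
  set G : ℕ → ℝ → ℝ≥0∞ := fun j => (Set.Ioo (τ j) 1).indicator
    (fun s => f s * (W s * ν (Set.Ioo (τ j) s) ^ m')) with hGdef
  have hGm : ∀ j, Measurable (G j) := fun j =>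
    (hfm.mul (hW.mul ((hκm.comp (measurable_const.prodMk measurable_id)).pow_const
      m'))).indicator measurableSet_Ioo
  have hGle : ∀ j j' : ℕ, j ≤ j' → ∀ s, G j s ≤ G j' s := by
    intro j j' hjj s
    by_cases hs : s ∈ Set.Ioo (τ j) 1
    · simp only [hGdef]
      have hs' : s ∈ Set.Ioo (τ j') 1 := ⟨lt_of_le_of_lt (hτanti j j' hjj) hs.1, hs.2⟩
      rw [Set.indicator_of_mem hs, Set.indicator_of_mem hs']
      exact mul_le_mul_right (mul_le_mul_right (pow_le_pow_left'
        (measure_mono (Set.Ioo_subset_Ioo_left (hτanti j j' hjj))) m') _) _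
    · simp only [hGdef]
      rw [Set.indicator_of_notMem hs]
      exact zero_le
  have hGsup : ∀ s, (⨆ j, G j s)
      = (Set.Ioo (0:ℝ) 1).indicator (fun s => f s * (W s * ν (Set.Ioo 0 s) ^ m')) s := by
    intro s
    by_cases hs : s ∈ Set.Ioo (0:ℝ) 1
    · rw [Set.indicator_of_mem hs]
      have hb : Monotone fun j => ν (Set.Ioo (τ j) s) := fun j j' h =>
        measure_mono (Set.Ioo_subset_Ioo_left (hτanti j j' h))
      have hbs : (⨆ j, ν (Set.Ioo (τ j) s)) = ν (Set.Ioo 0 s) := by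
        rw [← Directed.measure_iUnion
          (Monotone.directed_le fun j j' h => Set.Ioo_subset_Ioo_left (hτanti j j' h))]
        congr 1
        ext x
        simp only [Set.mem_iUnion, Set.mem_Ioo]
        constructor
        · rintro ⟨j, h1, h2⟩
          exact ⟨lt_trans (hτmem j).1 h1, h2⟩
        · rintro ⟨h1, h2⟩
          obtain ⟨j, hj⟩ := hτlt x h1
          exact ⟨j, hj, h2⟩
      have hpow : (⨆ j, ν (Set.Ioo (τ j) s) ^ m') = ν (Set.Ioo 0 s) ^ m' := by
        rw [← hbs]
        refine iSup_eq_of_tendsto (fun j j' h => pow_le_pow_left' (hb h) m') ?_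
        exact ENNReal.Tendsto.pow (tendsto_atTop_iSup hb)
      obtain ⟨j0, hj0⟩ := hτlt s hs.1
      apply le_antisymm
      · refine iSup_le fun j => ?_
        by_cases hsj : s ∈ Set.Ioo (τ j) 1
        · simp only [hGdef]
          rw [Set.indicator_of_mem hsj]
          exact mul_le_mul_right (mul_le_mul_right (pow_le_pow_left'
            (measure_mono (Set.Ioo_subset_Ioo_left (hτmem j).1.le)) m') _) _
        · simp only [hGdef]
          rw [Set.indicator_of_notMem hsj]
          exact zero_le
      · calc f s * (W s * ν (Set.Ioo 0 s) ^ m')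
            = ⨆ j, f s * (W s * ν (Set.Ioo (τ j) s) ^ m') := by
              rw [← hpow]
              simp only [ENNReal.mul_iSup]
          _ ≤ ⨆ j, G j s := by
              refine iSup_le fun j => le_iSup_of_le (max j j0) ?_
              have hmem : s ∈ Set.Ioo (τ (max j j0)) 1 :=
                ⟨lt_of_le_of_lt (hτanti j0 (max j j0) (le_max_right _ _)) hj0, hs.2⟩
              simp only [hGdef]
              rw [Set.indicator_of_mem hmem]
              exact mul_le_mul_right (mul_le_mul_right (pow_le_pow_left'
                (measure_mono (Set.Ioo_subset_Ioo_left
                  (hτanti j (max j j0) (le_max_left _ _)))) m') _) _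
    · rw [Set.indicator_of_notMem hs]
      refine le_antisymm (iSup_le fun j => ?_) (zero_le)
      simp only [hGdef]
      rw [Set.indicator_of_notMem (fun hsj => hs ⟨lt_trans (hτmem j).1 hsj.1, hsj.2⟩)]
  rw [hgoal_eq]
  calc (∫⁻ s in Set.Ioo (0:ℝ) 1, f s * (W s * ν (Set.Ioo 0 s) ^ m') ∂volume)
      = ∫⁻ s, (Set.Ioo (0:ℝ) 1).indicator
          (fun s => f s * (W s * ν (Set.Ioo 0 s) ^ m')) s ∂volume :=
        (lintegral_indicator measurableSet_Ioo _).symm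
    _ = ∫⁻ s, ⨆ j, G j s ∂volume := by
        refine lintegral_congr fun s => (hGsup s).symm
    _ = ⨆ j, ∫⁻ s, G j s ∂volume :=
        lintegral_iSup hGm fun j j' h s => hGle j j' h s
    _ ≤ ((m'.factorial : ℕ) : ℝ≥0∞) * (C : ℝ≥0∞) := by
        refine iSup_le fun j => ?_
        rw [lintegral_indicator measurableSet_Ioo]
        have e : ∀ s, f s * (W s * ν (Set.Ioo (τ j) s) ^ m')
            = f s * W s * ν (Set.Ioo (τ j) s) ^ m' := fun s => by rw [mul_assoc]
        simp_rw [e]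
        exact le_trans (step1 m' (τ j) (hτmem j))
          (mul_le_mul_right (step2 (τ j) (hτmem j)) _)
end
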